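/- arXiv:2510.07617 — 2 statements merged into one kernel-verified Lean document; each statement's English description precedes it below -/
import Mathlib

section
/- Let X be a set and T an overlap-free subset of ⟨X⟩\{1}. Then the group of invertible elements (the group of units) of ⟨X : i(T)⟩ is a free group on T; more precisely, the homomorphism from the free group on the set T to the group of units of ⟨X : i(T)⟩ sending each generator t ∈ T to the image of t in ⟨X : i(T)⟩ is an isomorphism of groups. -/
namespace AdjoinInverses

variable {X : Type*}

/-- The embedding of the free monoid on `X` into the free monoid on `X ⊕ S`. -/
def emb (S : Set (FreeMonoid X)) : FreeMonoid X →* FreeMonoid (X ⊕ S) :=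
  FreeMonoid.map Sum.inl

/-- The generator `i(w)` corresponding to `w ∈ S`. -/
def igen (S : Set (FreeMonoid X)) (w : S) : FreeMonoid (X ⊕ S) :=
  FreeMonoid.of (Sum.inr w)

/-- The defining relations `w ⬝ i(w) = 1` and `i(w) ⬝ w = 1` for `w ∈ S`. -/
inductive InvRel (S : Set (FreeMonoid X)) : FreeMonoid (X ⊕ S) → FreeMonoid (X ⊕ S) → Prop
  | mul_inv (w : S) : InvRel S (emb S w.1 * igen S w) 1
  | inv_mul (w : S) : InvRel S (igen S w * emb S w.1) 1

/-- The congruence generated by the defining relations. -/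
def invCon (S : Set (FreeMonoid X)) : Con (FreeMonoid (X ⊕ S)) := conGen (InvRel S)

/-- The monoid `⟨X : i(S)⟩` obtained from the free monoid on `X` by universally
adjoining a two-sided inverse to each element of `S`. -/
def AdjInv (S : Set (FreeMonoid X)) : Type _ := (invCon S).Quotient

instance (S : Set (FreeMonoid X)) : Monoid (AdjInv S) := Con.monoid _

/-- The natural homomorphism `⟨X⟩ → ⟨X : i(S)⟩`. -/
def natHom (S : Set (FreeMonoid X)) : FreeMonoid X →* AdjInv S :=
  ((invCon S).mk').comp (emb S)

/-- The adjoined inverse `i(w)`, as an element of `⟨X : i(S)⟩`. -/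
def invElt (S : Set (FreeMonoid X)) (w : S) : AdjInv S :=
  (invCon S).mk' (igen S w)

/-- `S` and `S'` are inverse-equivalent: each element of `S'` becomes invertible in
`⟨X : i(S)⟩` and each element of `S` becomes invertible in `⟨X : i(S')⟩`. -/
def InvEquiv (S S' : Set (FreeMonoid X)) : Prop :=
  (∀ w ∈ S', IsUnit (natHom S w)) ∧ ∀ w ∈ S, IsUnit (natHom S' w)

/-- Two (nonidentity) elements of the free monoid overlap: one can be written `a*b`
and the other `b*c` with `b ≠ 1` and at most one of `a`, `c` equal to `1`. -/
def Overlap (u v : FreeMonoid X) : Prop :=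
  ∃ a b c : FreeMonoid X, b ≠ 1 ∧ (a ≠ 1 ∨ c ≠ 1) ∧ u = a * b ∧ v = b * c

/-- A set `T` is overlap-free if no pair of elements of `T` (distinct or not) overlap. -/
def OverlapFree (T : Set (FreeMonoid X)) : Prop :=
  ∀ u ∈ T, ∀ v ∈ T, ¬ Overlap u v


/-! ### Word-level rewriting development -/

section Development

variable {T : Set (FreeMonoid X)}

abbrev Lw (T : Set (FreeMonoid X)) := List (X ⊕ ↥T)

/-- the word-level embedding -/
def embw (T : Set (FreeMonoid X)) (w : FreeMonoid X) : Lw T := (FreeMonoid.toList w).map Sum.inl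

@[simp] lemma embw_one : embw T (1 : FreeMonoid X) = [] := rfl

lemma embw_eq_nil_iff {w : FreeMonoid X} : embw T w = [] ↔ w = 1 := by
  constructor
  · intro h
    have : FreeMonoid.toList w = [] := by simpa [embw] using h
    exact FreeMonoid.toList.injective (by simp [this])
  · rintro rfl; rfl

@[simp] lemma embw_mul (a b : FreeMonoid X) : embw T (a * b) = embw T a ++ embw T b := by
  simp [embw, FreeMonoid.toList_mul]

lemma not_inr_mem_embw (w : FreeMonoid X) (s : ↥T) : (Sum.inr s : X ⊕ ↥T) ∉ embw T w := by
  simp [embw]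

lemma embw_injective : Function.Injective (embw T) := by
  intro a b h
  have := List.map_injective_iff.2 Sum.inl_injective h
  exact FreeMonoid.toList.injective this

lemma embw_split {w : FreeMonoid X} {a b : Lw T} (h : embw T w = a ++ b) :
    ∃ w₁ w₂ : FreeMonoid X, w = w₁ * w₂ ∧ a = embw T w₁ ∧ b = embw T w₂ := by
  rcases List.map_eq_append_iff.1 h with ⟨l₁, l₂, hl, h₁, h₂⟩
  refine ⟨FreeMonoid.ofList l₁, FreeMonoid.ofList l₂, ?_, ?_, ?_⟩
  · apply FreeMonoid.toList.injective; simp [hl, FreeMonoid.toList_mul]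
  · simp [embw, h₁.symm]
  · simp [embw, h₂.symm]

/-- A redex word. -/
def IsRedex (T : Set (FreeMonoid X)) (R : Lw T) : Prop :=
  ∃ t : ↥T, R = embw T t.1 ++ [Sum.inr t] ∨ R = Sum.inr t :: embw T t.1

/-- One rewriting step: delete one redex. -/
def Stp (T : Set (FreeMonoid X)) (z z' : Lw T) : Prop :=
  ∃ l r R : Lw T, IsRedex T R ∧ z = l ++ R ++ r ∧ z' = l ++ r

lemma stp_append_left {a b : Lw T} (c : Lw T) (h : Stp T a b) : Stp T (c ++ a) (c ++ b) := by
  rcases h with ⟨l, r, R, hR, rfl, rfl⟩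
  exact ⟨c ++ l, r, R, hR, by simp, by simp⟩

lemma stp_append_right {a b : Lw T} (c : Lw T) (h : Stp T a b) : Stp T (a ++ c) (b ++ c) := by
  rcases h with ⟨l, r, R, hR, rfl, rfl⟩
  exact ⟨l, r ++ c, R, hR, by simp, by simp⟩

lemma redex_ne_nil {R : Lw T} (h : IsRedex T R) : R ≠ [] := by
  rcases h with ⟨t, rfl | rfl⟩ <;> simp

lemma stp_length {a b : Lw T} (h : Stp T a b) : b.length < a.length := by
  rcases h with ⟨l, r, R, hR, rfl, rfl⟩
  have := redex_ne_nil hR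
  have : 0 < R.length := List.length_pos_iff.2 this
  simp only [List.length_append]
  omega

lemma ovf {t t' : ↥T} (hT : OverlapFree T) {a b c : FreeMonoid X} (hb : b ≠ 1)
    (hac : a ≠ 1 ∨ c ≠ 1) (h : t.1 = a * b) (h' : t'.1 = b * c) : False :=
  hT t.1 t.2 t'.1 t'.2 ⟨a, b, c, hb, hac, h, h'⟩

lemma embw_head {w : FreeMonoid X} (hw : w ≠ 1) :
    ∃ y ys, embw T w = Sum.inl y :: ys := by
  rcases h : FreeMonoid.toList w with _ | ⟨y, ys⟩
  · exact absurd (FreeMonoid.toList.injective (by simp [h])) hw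
  · exact ⟨y, ys.map Sum.inl, by simp [embw, h]⟩

lemma eq_one_of_embw_left {a w : FreeMonoid X} (h : embw T w = embw T a ++ embw T w) : a = 1 := by
  have := congrArg List.length h
  simp only [List.length_append, List.length_map, embw] at this
  have : (FreeMonoid.toList a).length = 0 := by omega
  exact FreeMonoid.toList.injective (by simpa using List.length_eq_zero_iff.1 this)

lemma split_sufA {m b : Lw T} {w : FreeMonoid X} {t : ↥T} (hb : b ≠ [])
    (h : m ++ b = embw T w ++ [Sum.inr t]) :
    ∃ w₁ w₂ : FreeMonoid X, w = w₁ * w₂ ∧ m = embw T w₁ ∧ b = embw T w₂ ++ [Sum.inr t] := by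
  rcases List.append_eq_append_iff.1 h with ⟨a', ha1, ha2⟩ | ⟨c', hc1, hc2⟩
  · rcases embw_split ha1 with ⟨w₁, w₂, rfl, rfl, rfl⟩
    exact ⟨w₁, w₂, rfl, rfl, ha2⟩
  · rcases c' with _ | ⟨x, c''⟩
    · refine ⟨w, 1, by simp, by simpa using hc1, by simpa using hc2.symm⟩
    · exfalso
      simp only [List.cons_append, List.cons.injEq] at hc2
      exact hb (List.append_eq_nil_iff.1 hc2.2.symm).2

lemma split_preB {m b : Lw T} {w : FreeMonoid X} {t : ↥T} (hm : m ≠ [])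
    (h : m ++ b = Sum.inr t :: embw T w) :
    ∃ w₁ w₂ : FreeMonoid X, w = w₁ * w₂ ∧ m = Sum.inr t :: embw T w₁ ∧ b = embw T w₂ := by
  rcases m with _ | ⟨x, m'⟩
  · exact absurd rfl hm
  · simp only [List.cons_append, List.cons.injEq] at h
    rcases embw_split h.2.symm with ⟨w₁, w₂, rfl, rfl, rfl⟩
    exact ⟨w₁, w₂, rfl, by rw [h.1], rfl⟩

/-- Overlap of two redexes: `R = m ++ b`, `R' = b ++ c`, `b ≠ []`. -/
lemma overlap_cases (h1 : (1 : FreeMonoid X) ∉ T) (hT : OverlapFree T)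
    {R R' m b c : Lw T} (hR : IsRedex T R) (hR' : IsRedex T R') (hb : b ≠ [])
    (e1 : R = m ++ b) (e2 : R' = b ++ c) :
    (m = [] ∧ c = []) ∨
    (∃ t : ↥T, m = embw T t.1 ∧ b = [Sum.inr t] ∧ c = embw T t.1) ∨
    (∃ t : ↥T, m = [Sum.inr t] ∧ b = embw T t.1 ∧ c = [Sum.inr t]) := by
  have wne : ∀ t : ↥T, t.1 ≠ 1 := fun t ht => h1 (ht ▸ t.2)
  rcases hR with ⟨t, rfl | rfl⟩
  · -- R = A t
    rcases split_sufA hb e1.symm with ⟨w₁, w₂, hw, rfl, rfl⟩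
    rcases hR' with ⟨t', e | e⟩
    · -- R' = A t'
      rw [e] at e2
      -- embw t' ++ [inr t'] = embw w₂ ++ [inr t] ++ c
      rcases List.eq_nil_or_concat c with rfl | ⟨c₀, z, rfl⟩
      · left
        simp only [List.append_nil] at e2
        have h2 := List.append_inj' e2 rfl
        have ht' : t' = t := by
          have := h2.2; simpa using this
        have hw2 : embw T t.1 = embw T w₂ := by rw [← ht']; exact h2.1
        constructor
        · have : embw T t.1 = embw T w₁ ++ embw T t.1 := by
            conv_lhs => rw [hw]
            rw [embw_mul, hw2]
          have := eq_one_of_embw_left this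
          rw [this]; rfl
        · rfl
      · exfalso
        have e2' : embw T t'.1 ++ [Sum.inr t'] = (embw T w₂ ++ [Sum.inr t] ++ c₀) ++ [z] := by
          rw [e2]; simp
        have h2 := List.append_inj' e2' rfl
        have : (Sum.inr t : X ⊕ ↥T) ∈ embw T t'.1 := by
          rw [h2.1]; simp
        exact not_inr_mem_embw _ _ this
    · -- R' = B t'
      rw [e] at e2
      by_cases hw2 : w₂ = 1
      · subst hw2
        rw [mul_one] at hw
        simp only [embw_eq_nil_iff.2 rfl, List.nil_append, List.singleton_append,
          List.cons.injEq] at e2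
        have ht' : t' = t := Sum.inr.inj e2.1
        subst ht'
        right; left
        exact ⟨t', by rw [hw], by simp, e2.2.symm⟩
      · exfalso
        rcases embw_head (T := T) hw2 with ⟨y, ys, hy⟩
        rw [hy] at e2
        simp at e2
  · -- R = B t
    rcases m with _ | ⟨x, m₂⟩
    · -- m = [], b = R
      simp only [List.nil_append] at e1
      subst e1
      rcases hR' with ⟨t', e | e⟩
      · exfalso
        rcases embw_head (T := T) (wne t') with ⟨y, ys, hy⟩
        rw [e, hy] at e2
        simp at e2
      · rw [e] at e2
        simp only [List.cons_append, List.cons.injEq] at e2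
        have ht' : t' = t := Sum.inr.inj e2.1
        subst ht'
        left
        refine ⟨rfl, ?_⟩
        have hl := congrArg List.length e2.2
        simp only [List.length_append, List.length_map] at hl
        exact List.eq_nil_of_length_eq_zero (by omega)
    · -- m = x :: m₂
      rcases split_preB (m := x :: m₂) (by simp) e1.symm with ⟨w₁, w₂, hw, hm, rfl⟩
      have hw2 : w₂ ≠ 1 := fun h => hb (by simp [h])
      rcases hR' with ⟨t', e | e⟩
      · -- R' = A t' = embw w₂ ++ c
        rw [e] at e2
        rcases List.eq_nil_or_concat c with rfl | ⟨c₀, z, rfl⟩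
        · exfalso
          simp only [List.append_nil] at e2
          have : (Sum.inr t' : X ⊕ ↥T) ∈ embw T w₂ := by rw [← e2]; simp
          exact not_inr_mem_embw _ _ this
        · have e2' : embw T t'.1 ++ [Sum.inr t'] = embw T w₂ ++ c₀ ++ [z] := by
            rw [e2]; simp
          have h2 := List.append_inj' e2' rfl
          rcases embw_split h2.1 with ⟨v₁, v₂, hv, hv1, hv2⟩
          have hv₁ : v₁ = w₂ := embw_injective hv1.symm
          subst hv₁
          by_cases hcrit : w₁ = 1 ∧ v₂ = 1
          · rcases hcrit with ⟨hw1, hv2'⟩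
            subst hw1; subst hv2'
            rw [one_mul] at hw; rw [mul_one] at hv
            right; right
            have htt' : t = t' := Subtype.ext (by rw [hw, hv])
            refine ⟨t, by rw [hm]; simp, by rw [hw], ?_⟩
            have hz : z = Sum.inr t' := by simpa using h2.2.symm
            rw [hv2, embw_eq_nil_iff.2 rfl, hz, htt']
            simp
          · exfalso
            have : w₁ ≠ 1 ∨ v₂ ≠ 1 := by tauto
            exact ovf hT hw2 this hw hv
      · exfalso
        rw [e] at e2
        rcases embw_head (T := T) hw2 with ⟨y, ys, hy⟩
        rw [hy] at e2
        simp at e2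

/-- a redex cannot be a proper factor of a redex -/
lemma redex_factor (h1 : (1 : FreeMonoid X) ∉ T) {R R' m x : Lw T}
    (hR : IsRedex T R) (hR' : IsRedex T R') (h : R = m ++ R' ++ x) :
    m = [] ∧ x = [] := by
  have wne : ∀ t : ↥T, t.1 ≠ 1 := fun t ht => h1 (ht ▸ t.2)
  have hinr : ∃ s : ↥T, (Sum.inr s : X ⊕ ↥T) ∈ R' := by
    rcases hR' with ⟨t, rfl | rfl⟩ <;> exact ⟨t, by simp⟩
  rcases hR with ⟨t, rfl | rfl⟩
  · -- R = A t
    rcases List.eq_nil_or_concat x with rfl | ⟨x₀, z, rfl⟩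
    · simp only [List.append_nil] at h
      refine ⟨?_, rfl⟩
      rcases hR' with ⟨t', e | e⟩
      · rw [e] at h
        have h' : embw T t.1 ++ [Sum.inr t] = (m ++ embw T t'.1) ++ [Sum.inr t'] := by
          rw [h]; simp
        have h2 := List.append_inj' h' rfl
        have ht' : t' = t := by
          have := h2.2; simp at this; exact this.symm
        subst ht'
        have : embw T t'.1 = embw T (1 * t'.1) := by rw [one_mul]
        have hml : m ++ embw T t'.1 = embw T t'.1 := h2.1.symm
        have hlen := congrArg List.length hml
        simp only [List.length_append] at hlen
        exact List.eq_nil_of_length_eq_zero (by omega)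
      · exfalso
        rw [e] at h
        -- embw t ++ [inr t] = m ++ (inr t' :: embw t')
        rcases List.append_eq_append_iff.1 h.symm with ⟨a', ha1, ha2⟩ | ⟨c', hc1, hc2⟩
        · -- embw t = m ++ a', inr t' :: embw t' = a' ++ [inr t]
          rcases a' with _ | ⟨y, a''⟩
          · simp only [List.nil_append, List.cons.injEq] at ha2
            exact wne t' (embw_eq_nil_iff.1 ha2.2)
          · have : y ∈ embw T t.1 := by rw [ha1]; simp
            have hy : y = Sum.inr t' := by
              simp only [List.cons_append, List.cons.injEq] at ha2
              exact ha2.1.symm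
            rw [hy] at this
            exact not_inr_mem_embw _ _ this
        · -- m = embw t ++ c', [inr t] = c' ++ inr t' :: embw t'
          have hlen := congrArg List.length hc2
          simp [embw] at hlen
          have h0 : (FreeMonoid.toList t'.1).length = 0 := by omega
          exact wne t' (FreeMonoid.toList.injective (by simpa using List.length_eq_zero_iff.1 h0))
    · -- x = x₀ ++ [z]: impossible since inr would be inside embw t
      exfalso
      have h' : embw T t.1 ++ [Sum.inr t] = (m ++ R' ++ x₀) ++ [z] := by rw [h]; simp
      have h2 := List.append_inj' h' rfl
      rcases hinr with ⟨s, hs⟩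
      have : (Sum.inr s : X ⊕ ↥T) ∈ embw T t.1 := by
        rw [h2.1]; simp [hs]
      exact not_inr_mem_embw _ _ this
  · -- R = B t
    rcases m with _ | ⟨y, m₀⟩
    · simp only [List.nil_append] at h
      refine ⟨rfl, ?_⟩
      rcases hR' with ⟨t', e | e⟩
      · exfalso
        rcases embw_head (T := T) (wne t') with ⟨y, ys, hy⟩
        rw [e, hy] at h
        simp at h
      · rw [e] at h
        simp only [List.cons_append, List.cons.injEq] at h
        have ht' : t' = t := Sum.inr.inj h.1.symm
        subst ht'
        have hlen := congrArg List.length h.2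
        simp only [List.length_append] at hlen
        exact List.eq_nil_of_length_eq_zero (by omega)
    · exfalso
      simp only [List.cons_append, List.cons.injEq] at h
      rcases hinr with ⟨s, hs⟩
      have : (Sum.inr s : X ⊕ ↥T) ∈ embw T t.1 := by
        rw [h.2]; simp [hs]
      exact not_inr_mem_embw _ _ this

/-- The one-step diamond-ish property. -/
lemma diamond (h1 : (1 : FreeMonoid X) ∉ T) (hT : OverlapFree T) {z z₁ z₂ : Lw T}
    (s1 : Stp T z z₁) (s2 : Stp T z z₂) :
    z₁ = z₂ ∨ ∃ d, Stp T z₁ d ∧ Stp T z₂ d := by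
  -- auxiliary, for the case l₂ = l₁ ++ m
  have aux : ∀ (l₁ m r₁ r₂ R₁ R₂ : Lw T), IsRedex T R₁ → IsRedex T R₂ →
      R₁ ++ r₁ = m ++ (R₂ ++ r₂) →
      l₁ ++ r₁ = (l₁ ++ m) ++ r₂ ∨
        ∃ d, Stp T (l₁ ++ r₁) d ∧ Stp T ((l₁ ++ m) ++ r₂) d := by
    intro l₁ m r₁ r₂ R₁ R₂ hR₁ hR₂ hsplit
    rcases List.append_eq_append_iff.1 hsplit with ⟨a', ha1, ha2⟩ | ⟨b, hb1, hb2⟩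
    · -- m = R₁ ++ a', r₁ = a' ++ R₂ ++ r₂ : disjoint
      right
      refine ⟨l₁ ++ a' ++ r₂, ?_, ?_⟩
      · exact ⟨l₁ ++ a', r₂, R₂, hR₂, by rw [ha2]; simp, by simp⟩
      · exact ⟨l₁, a' ++ r₂, R₁, hR₁, by rw [ha1]; simp, by simp⟩
    · -- R₁ = m ++ b, R₂ ++ r₂ = b ++ r₁
      rcases List.append_eq_append_iff.1 hb2 with ⟨k, hk1, hk2⟩ | ⟨c, hc1, hc2⟩
      · -- b = R₂ ++ k, r₂ = k ++ r₁ : R₂ inside R₁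
        have : R₁ = m ++ R₂ ++ k := by rw [hb1, hk1]; simp
        rcases redex_factor h1 hR₁ hR₂ this with ⟨rfl, rfl⟩
        left
        simp only [List.nil_append] at hk2
        rw [hk2]; simp
      · -- R₂ = b ++ c, r₁ = c ++ r₂
        rcases List.eq_nil_or_concat' b with rfl | hbne
        · -- b = [] : R₁ = m, boundary-disjoint
          right
          simp only [List.append_nil] at hb1
          simp only [List.nil_append] at hc1
          refine ⟨l₁ ++ r₂, ?_, ?_⟩
          · exact ⟨l₁, r₂, R₂, hR₂, by rw [hc2, hc1]; simp, rfl⟩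
          · exact ⟨l₁, r₂, R₁, hR₁, by rw [hb1], rfl⟩
        · have hbne' : b ≠ [] := by rcases hbne with ⟨_, _, rfl⟩; simp
          rcases overlap_cases h1 hT hR₁ hR₂ hbne' hb1 hc1 with
            ⟨rfl, rfl⟩ | ⟨t, rfl, rfl, rfl⟩ | ⟨t, rfl, rfl, rfl⟩
          · left; rw [hc2]; simp
          · left; rw [hc2]; simp
          · left; rw [hc2]; simp
  rcases s1 with ⟨l₁, r₁, R₁, hR₁, e₁, rfl⟩
  rcases s2 with ⟨l₂, r₂, R₂, hR₂, e₂, rfl⟩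
  rw [e₂] at e₁
  have e' : l₁ ++ (R₁ ++ r₁) = l₂ ++ (R₂ ++ r₂) := by
    rw [← List.append_assoc, ← List.append_assoc]; exact e₁.symm
  rcases List.append_eq_append_iff.1 e' with ⟨m, hm1, hm2⟩ | ⟨m, hm1, hm2⟩
  · rcases aux l₁ m r₁ r₂ R₁ R₂ hR₁ hR₂ hm2 with h | ⟨d, hd1, hd2⟩
    · left; rw [h, hm1]
    · right; exact ⟨d, hd1, by rwa [hm1]⟩
  · rcases aux l₂ m r₂ r₁ R₂ R₁ hR₂ hR₁ hm2 with h | ⟨d, hd1, hd2⟩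
    · left; rw [h, hm1]
    · right; exact ⟨d, by rwa [hm1], hd1⟩

open Relation

/-- Church–Rosser for `Stp`. -/
lemma eqv_join (h1 : (1 : FreeMonoid X) ∉ T) (hT : OverlapFree T) {a b : Lw T}
    (h : EqvGen (Stp T) a b) : Join (ReflTransGen (Stp T)) a b := by
  have hcr : ∀ a b c : Lw T, Stp T a b → Stp T a c →
      ∃ d, ReflGen (Stp T) b d ∧ ReflTransGen (Stp T) c d := by
    intro a b c s1 s2
    rcases diamond h1 hT s1 s2 with rfl | ⟨d, hd1, hd2⟩
    · exact ⟨b, ReflGen.refl, ReflTransGen.refl⟩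
    · exact ⟨d, ReflGen.single hd1, ReflTransGen.single hd2⟩
  have hequiv := equivalence_join_reflTransGen hcr
  induction h with
  | rel x y hxy => exact ⟨y, ReflTransGen.single hxy, ReflTransGen.refl⟩
  | refl x => exact hequiv.refl x
  | symm x y _ ih => exact hequiv.symm ih
  | trans x y z _ _ ih1 ih2 => exact hequiv.trans ih1 ih2

/-- a reduced (normal-form) word -/
def Reduced (T : Set (FreeMonoid X)) (z : Lw T) : Prop := ∀ z', ¬ Stp T z z'

lemma reduced_nil : Reduced T ([] : Lw T) := by
  rintro z' ⟨l, r, R, ⟨t, rfl | rfl⟩, h, _⟩ <;> simp at h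

lemma reduced_of_append {a b : Lw T} (h : Reduced T (a ++ b)) :
    Reduced T a ∧ Reduced T b := by
  constructor
  · rintro z' ⟨l, r, R, hR, rfl, rfl⟩
    exact h (l ++ (r ++ b)) ⟨l, r ++ b, R, hR, by simp, by simp⟩
  · rintro z' ⟨l, r, R, hR, rfl, rfl⟩
    exact h (a ++ l ++ r) ⟨a ++ l, r, R, hR, by simp, by simp⟩

lemma reduced_no_more {a b : Lw T} (h : Reduced T a) (h2 : ReflTransGen (Stp T) a b) :
    a = b := by
  induction h2 with
  | refl => rfl
  | tail hab hbc ih => exact absurd hbc (ih ▸ h _)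

lemma reduced_eqv_eq (h1 : (1 : FreeMonoid X) ∉ T) (hT : OverlapFree T) {a b : Lw T}
    (ha : Reduced T a) (hb : Reduced T b) (h : EqvGen (Stp T) a b) : a = b := by
  rcases eqv_join h1 hT h with ⟨c, hac, hbc⟩
  rw [reduced_no_more ha hac, reduced_no_more hb hbc]

lemma exists_reduced (z : Lw T) :
    ∃ u : Lw T, Reduced T u ∧ ReflTransGen (Stp T) z u := by
  by_cases h : Reduced T z
  · exact ⟨z, h, ReflTransGen.refl⟩
  · simp only [Reduced, not_forall, not_not] at h
    rcases h with ⟨z', hz'⟩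
    have hlen : z'.length < z.length := stp_length hz'
    rcases exists_reduced z' with ⟨u, hu, hru⟩
    exact ⟨u, hu, ReflTransGen.head hz' hru⟩
termination_by z.length

/-! ### bridge between `invCon` and `Stp` -/

lemma eqvgen_append {a b c d : Lw T} (h : EqvGen (Stp T) a b) (h' : EqvGen (Stp T) c d) :
    EqvGen (Stp T) (a ++ c) (b ++ d) := by
  have left : ∀ (e : Lw T) {x y : Lw T}, EqvGen (Stp T) x y → EqvGen (Stp T) (x ++ e) (y ++ e) := by
    intro e x y h
    induction h with
    | rel x y hxy => exact EqvGen.rel _ _ (stp_append_right e hxy)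
    | refl x => exact EqvGen.refl _
    | symm x y _ ih => exact EqvGen.symm _ _ ih
    | trans x y z _ _ ih1 ih2 => exact EqvGen.trans _ _ _ ih1 ih2
  have right : ∀ (e : Lw T) {x y : Lw T}, EqvGen (Stp T) x y → EqvGen (Stp T) (e ++ x) (e ++ y) := by
    intro e x y h
    induction h with
    | rel x y hxy => exact EqvGen.rel _ _ (stp_append_left e hxy)
    | refl x => exact EqvGen.refl _
    | symm x y _ ih => exact EqvGen.symm _ _ ih
    | trans x y z _ _ ih1 ih2 => exact EqvGen.trans _ _ _ ih1 ih2
  exact EqvGen.trans _ _ _ (left c h) (right b h')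

lemma toList_emb (w : FreeMonoid X) : FreeMonoid.toList (emb T w) = embw T w := rfl

lemma toList_igen (t : ↥T) : FreeMonoid.toList (igen T t) = [Sum.inr t] := rfl

/-- the congruence of joinability -/
def eqvCon (T : Set (FreeMonoid X)) : Con (FreeMonoid (X ⊕ ↥T)) where
  r a b := EqvGen (Stp T) (FreeMonoid.toList a) (FreeMonoid.toList b)
  iseqv := ⟨fun _ => EqvGen.refl _, fun h => EqvGen.symm _ _ h,
    fun h h' => EqvGen.trans _ _ _ h h'⟩
  mul' := fun h h' => by
    simpa [FreeMonoid.toList_mul] using eqvgen_append h h'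

lemma ofList_redexA (t : ↥T) :
    FreeMonoid.ofList (embw T t.1 ++ [Sum.inr t]) = emb T t.1 * igen T t := rfl

lemma ofList_redexB (t : ↥T) :
    FreeMonoid.ofList (Sum.inr t :: embw T t.1) = igen T t * emb T t.1 := rfl

/-- the bridge -/
lemma invCon_iff_eqvgen {x y : FreeMonoid (X ⊕ ↥T)} :
    invCon T x y ↔ EqvGen (Stp T) (FreeMonoid.toList x) (FreeMonoid.toList y) := by
  constructor
  · intro h
    have hle : invCon T ≤ eqvCon T := by
      refine (Con.conGen_le).2 fun a b hab => ?_
      rcases hab with w | w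
      · exact EqvGen.rel _ _ ⟨[], [], embw T w.1 ++ [Sum.inr w], ⟨w, Or.inl rfl⟩,
          by simp [FreeMonoid.toList_mul, toList_emb, toList_igen], by simp⟩
      · exact EqvGen.rel _ _ ⟨[], [], Sum.inr w :: embw T w.1, ⟨w, Or.inr rfl⟩,
          by simp [FreeMonoid.toList_mul, toList_emb, toList_igen], by simp⟩
    exact hle h
  · intro h
    have main : ∀ {la lb : Lw T}, EqvGen (Stp T) la lb →
        invCon T (FreeMonoid.ofList la) (FreeMonoid.ofList lb) := by
      intro la lb h
      induction h with
      | rel u v huv =>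
        rcases huv with ⟨l, r, R, ⟨t, rfl | rfl⟩, rfl, rfl⟩
        · have base : invCon T (FreeMonoid.ofList (embw T t.1 ++ [Sum.inr t])) 1 := by
            rw [ofList_redexA]; exact ConGen.Rel.of _ _ (InvRel.mul_inv t)
          have step := (invCon T).mul ((invCon T).mul ((invCon T).refl (FreeMonoid.ofList l))
            base) ((invCon T).refl (FreeMonoid.ofList r))
          rw [mul_one] at step
          simpa [FreeMonoid.ofList_append, mul_assoc] using step
        · have base : invCon T (FreeMonoid.ofList (Sum.inr t :: embw T t.1)) 1 := by
            rw [ofList_redexB]; exact ConGen.Rel.of _ _ (InvRel.inv_mul t)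
          have step := (invCon T).mul ((invCon T).mul ((invCon T).refl (FreeMonoid.ofList l))
            base) ((invCon T).refl (FreeMonoid.ofList r))
          rw [mul_one] at step
          have e1 : FreeMonoid.ofList (l ++ (Sum.inr t :: embw T t.1) ++ r) =
              FreeMonoid.ofList l * FreeMonoid.ofList (Sum.inr t :: embw T t.1) *
                FreeMonoid.ofList r := rfl
          have e2 : FreeMonoid.ofList (l ++ r) =
              FreeMonoid.ofList l * FreeMonoid.ofList r := by
            simp [FreeMonoid.ofList_append]
          rw [e1, e2]
          exact step
      | refl x => exact (invCon T).refl _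
      | symm x y _ ih => exact (invCon T).symm ih
      | trans x y z _ _ ih1 ih2 => exact (invCon T).trans ih1 ih2
    simpa [FreeMonoid.ofList_toList] using main h


/-! ### factorization predicates -/

/-- words factoring into adjoined-inverse letters and nonempty prefixes of `T`-elements. -/
inductive PF (T : Set (FreeMonoid X)) : Lw T → Prop
  | nil : PF T []
  | igen (t : ↥T) {u : Lw T} : PF T u → PF T (Sum.inr t :: u)
  | pre (t : ↥T) (p q : FreeMonoid X) (hp : p ≠ 1) (hpq : p * q = t.1) {u : Lw T} :
      PF T u → PF T (embw T p ++ u)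

/-- words factoring into adjoined-inverse letters and nonempty suffixes of `T`-elements. -/
inductive SF (T : Set (FreeMonoid X)) : Lw T → Prop
  | nil : SF T []
  | igen (t : ↥T) {u : Lw T} : SF T u → SF T (Sum.inr t :: u)
  | suf (t : ↥T) (q s : FreeMonoid X) (hs : s ≠ 1) (hqs : q * s = t.1) {u : Lw T} :
      SF T u → SF T (embw T s ++ u)

lemma PF.append {a b : Lw T} (ha : PF T a) (hb : PF T b) : PF T (a ++ b) := by
  induction ha with
  | nil => exact hb
  | igen t _ ih => exact PF.igen t ih
  | pre t p q hp hpq _ ih => rw [List.append_assoc]; exact PF.pre t p q hp hpq ih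

lemma SF.append {a b : Lw T} (ha : SF T a) (hb : SF T b) : SF T (a ++ b) := by
  induction ha with
  | nil => exact hb
  | igen t _ ih => exact SF.igen t ih
  | suf t q s hs hqs _ ih => rw [List.append_assoc]; exact SF.suf t q s hs hqs ih

lemma mul_ne_one_left {a b : FreeMonoid X} (ha : a ≠ 1) : a * b ≠ 1 := by
  intro h
  have := congrArg (List.length ∘ FreeMonoid.toList) h
  simp only [Function.comp_apply, FreeMonoid.toList_mul, List.length_append] at this
  have ha' : FreeMonoid.toList a ≠ [] := fun hn => ha (FreeMonoid.toList.injective (by simp [hn]))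
  have : (FreeMonoid.toList a).length = 0 := by
    have h1 : (FreeMonoid.toList (1 : FreeMonoid X)).length = 0 := rfl
    omega
  exact ha' (List.length_eq_zero_iff.1 this)

lemma mul_ne_one_right {a b : FreeMonoid X} (hb : b ≠ 1) : a * b ≠ 1 := by
  intro h
  have := congrArg (List.length ∘ FreeMonoid.toList) h
  simp only [Function.comp_apply, FreeMonoid.toList_mul, List.length_append] at this
  have hb' : FreeMonoid.toList b ≠ [] := fun hn => hb (FreeMonoid.toList.injective (by simp [hn]))
  have : (FreeMonoid.toList b).length = 0 := by
    have h1 : (FreeMonoid.toList (1 : FreeMonoid X)).length = 0 := rfl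
    omega
  exact hb' (List.length_eq_zero_iff.1 this)

/-- decompose a straddling redex at the junction of two reduced words -/
lemma junction (h1 : (1 : FreeMonoid X) ∉ T) (hT : OverlapFree T) {u v : Lw T}
    (hu : Reduced T u) (hv : Reduced T v) (hne : u ≠ [])
    (heqv : EqvGen (Stp T) (u ++ v) []) :
    ∃ l r m b R, IsRedex T R ∧ R = m ++ b ∧ m ≠ [] ∧ b ≠ [] ∧
      u = l ++ m ∧ v = b ++ r ∧ EqvGen (Stp T) (l ++ r) [] := by
  have hnred : ¬ Reduced T (u ++ v) := by
    intro hr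
    have := reduced_eqv_eq h1 hT hr reduced_nil heqv
    simp only [List.append_eq_nil_iff] at this
    exact hne this.1
  simp only [Reduced, not_forall, not_not] at hnred
  rcases hnred with ⟨z', l, r, R, hR, he, rfl⟩
  have hstep : Stp T (u ++ v) (l ++ r) := ⟨l, r, R, hR, he, rfl⟩
  have heqv' : EqvGen (Stp T) (l ++ r) [] :=
    EqvGen.trans _ _ _ (EqvGen.symm _ _ (EqvGen.rel _ _ hstep)) heqv
  have he' : l ++ (R ++ r) = u ++ v := by rw [← List.append_assoc]; exact he.symm
  rcases List.append_eq_append_iff.1 he' with ⟨a', ha1, ha2⟩ | ⟨a', ha1, ha2⟩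
  · -- u = l ++ a', R ++ r = a' ++ v
    rcases List.append_eq_append_iff.1 ha2 with ⟨k, hk1, hk2⟩ | ⟨b, hb1, hb2⟩
    · -- a' = R ++ k : R inside u
      exfalso
      exact hu (l ++ k) ⟨l, k, R, hR, by rw [ha1, hk1]; simp, rfl⟩
    · -- R = a' ++ b, v = b ++ r
      rcases List.eq_nil_or_concat' a' with rfl | ⟨_, _, hne'⟩
      · exfalso
        simp only [List.nil_append] at hb1
        exact hv (r) ⟨[], r, R, hR, by rw [hb2, hb1]; simp, by simp⟩
      · rcases List.eq_nil_or_concat' b with rfl | ⟨_, _, hbne⟩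
        · exfalso
          simp only [List.append_nil] at hb1
          exact hu (l ++ []) ⟨l, [], R, hR, by rw [ha1, hb1]; simp, rfl⟩
        · refine ⟨l, r, a', b, R, hR, hb1, ?_, ?_, ha1, hb2, heqv'⟩
          · rw [hne']; simp
          · rw [hbne]; simp
  · -- l = u ++ a', v = a' ++ (R ++ r) : R inside v
    exfalso
    exact hv (a' ++ r) ⟨a', r, R, hR, by rw [ha2, ← List.append_assoc], rfl⟩

/-- a word with a right inverse factors into prefixes and inverse letters -/
lemma right_inv_PF (h1 : (1 : FreeMonoid X) ∉ T) (hT : OverlapFree T) :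
    ∀ n (u v : Lw T), u.length + v.length ≤ n → Reduced T u → Reduced T v →
      EqvGen (Stp T) (u ++ v) [] → PF T u := by
  intro n
  induction n with
  | zero =>
    intro u v hlen _ _ _
    have : u = [] := List.eq_nil_of_length_eq_zero (by omega)
    rw [this]; exact PF.nil
  | succ n ih =>
    intro u v hlen hu hv heqv
    rcases List.eq_nil_or_concat' u with rfl | ⟨_, _, hne⟩
    · exact PF.nil
    · have hne' : u ≠ [] := by rw [hne]; simp
      rcases junction h1 hT hu hv hne' heqv with
        ⟨l, r, m, b, R, hR, hRmb, hm, hb, rfl, rfl, heqv'⟩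
      have hl : Reduced T l := (reduced_of_append hu).1
      have hr : Reduced T r := (reduced_of_append hv).2
      have hlen' : l.length + r.length ≤ n := by
        have h1' := List.length_append (as := l) (bs := m)
        have h2' := List.length_append (as := b) (bs := r)
        have hm' : 0 < m.length := List.length_pos_iff.2 hm
        have hb' : 0 < b.length := List.length_pos_iff.2 hb
        simp only [List.length_append] at hlen
        omega
      have hPFl : PF T l := ih l r hlen' hl hr heqv'
      rcases hR with ⟨t, rfl | rfl⟩
      · -- A-redex
        rcases split_sufA hb hRmb.symm with ⟨w₁, w₂, hw, rfl, rfl⟩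
        have hw₁ : w₁ ≠ 1 := fun h => hm (by simp [h])
        exact hPFl.append (by simpa using PF.pre t w₁ w₂ hw₁ hw.symm PF.nil)
      · -- B-redex
        rcases split_preB hm hRmb.symm with ⟨w₁, w₂, hw, rfl, rfl⟩
        by_cases hw₁ : w₁ = 1
        · subst hw₁
          exact hPFl.append (by simpa using PF.igen t PF.nil)
        · exact hPFl.append (PF.igen t (by simpa using PF.pre t w₁ w₂ hw₁ hw.symm PF.nil))

/-- a word with a left inverse factors into suffixes and inverse letters -/
lemma left_inv_SF (h1 : (1 : FreeMonoid X) ∉ T) (hT : OverlapFree T) :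
    ∀ n (v u : Lw T), v.length + u.length ≤ n → Reduced T v → Reduced T u →
      EqvGen (Stp T) (v ++ u) [] → SF T u := by
  intro n
  induction n with
  | zero =>
    intro v u hlen _ _ _
    have : u = [] := List.eq_nil_of_length_eq_zero (by omega)
    rw [this]; exact SF.nil
  | succ n ih =>
    intro v u hlen hv hu heqv
    rcases List.eq_nil_or_concat' v with rfl | ⟨_, _, hne⟩
    · -- v = [] : then u ≈ [] and u reduced, so u = []
      have : u = [] := by
        have := reduced_eqv_eq h1 hT hu reduced_nil (by simpa using heqv)
        exact this
      rw [this]; exact SF.nil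
    · have hne' : v ≠ [] := by rw [hne]; simp
      rcases junction h1 hT hv hu hne' heqv with
        ⟨l, r, m, b, R, hR, hRmb, hm, hb, rfl, rfl, heqv'⟩
      have hl : Reduced T l := (reduced_of_append hv).1
      have hr : Reduced T r := (reduced_of_append hu).2
      have hlen' : l.length + r.length ≤ n := by
        have hm' : 0 < m.length := List.length_pos_iff.2 hm
        have hb' : 0 < b.length := List.length_pos_iff.2 hb
        simp only [List.length_append] at hlen
        omega
      have hSFr : SF T r := ih l r hlen' hl hr heqv'
      rcases hR with ⟨t, rfl | rfl⟩
      · -- A-redex : b ends with the inr letter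
        rcases split_sufA hb hRmb.symm with ⟨w₁, w₂, hw, rfl, rfl⟩
        have hw₁ : w₁ ≠ 1 := fun h => hm (by simp [h])
        by_cases hw₂ : w₂ = 1
        · subst hw₂
          simp only [embw_one, List.nil_append]
          exact SF.igen t hSFr
        · rw [List.append_assoc]
          exact SF.suf t w₁ w₂ hw₂ hw.symm (SF.igen t hSFr)
      · -- B-redex
        rcases split_preB hm hRmb.symm with ⟨w₁, w₂, hw, rfl, rfl⟩
        have hw₂ : w₂ ≠ 1 := fun h => hb (by simp [h])
        exact SF.suf t w₁ w₂ hw₂ hw.symm hSFr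

/-- the walking lemma: a `PF`-word cannot begin with a strict suffix of a `T`-element. -/
lemma walk (hT : OverlapFree T) {u₁ : Lw T} (hPF : PF T u₁) :
    ∀ (x a : FreeMonoid X) (t' : ↥T) (u₂ : Lw T), x ≠ 1 → a ≠ 1 → a * x = t'.1 →
      u₁ = embw T x ++ u₂ → False := by
  induction hPF with
  | nil =>
    intro x a t' u₂ hx _ _ h
    have : embw T x = [] := (List.append_eq_nil_iff.1 h.symm).1
    exact hx (embw_eq_nil_iff.1 this)
  | igen t _ _ =>
    intro x a t' u₂ hx _ _ h
    rcases embw_head (T := T) hx with ⟨y, ys, hy⟩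
    rw [hy] at h
    simp at h
  | pre t₂ p₂ q₂ hp₂ hpq₂ _ ih =>
    intro x a t' u₂ hx ha hax h
    rcases List.append_eq_append_iff.1 h with ⟨a', ha1, ha2⟩ | ⟨c', hc1, hc2⟩
    · -- embw x = embw p₂ ++ a'
      rcases embw_split ha1 with ⟨v₁, v₂, hv, hv1, rfl⟩
      have hv₁ : v₁ = p₂ := embw_injective hv1.symm
      subst hv₁
      by_cases hv₂ : v₂ = 1
      · -- x = p₂ : overlap between t' and t₂
        rw [hv₂, mul_one] at hv
        subst hv
        exact ovf hT hx (Or.inl ha) hax.symm hpq₂.symm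
      · -- recurse
        exact ih v₂ (a * v₁) t' u₂ hv₂ (mul_ne_one_left ha)
          (by rw [mul_assoc, ← hv, hax]) ha2
    · -- embw p₂ = embw x ++ c' : x is a prefix of p₂, hence of t₂ : overlap
      rcases embw_split hc1 with ⟨v₁, v₂, hv, hv1, rfl⟩
      have hv₁ : v₁ = x := embw_injective hv1.symm
      subst hv₁
      exact ovf (c := v₂ * q₂) hT hx (Or.inl ha) hax.symm (by rw [← hpq₂, hv, mul_assoc])


/-! ### the unit group -/

lemma natHom_def (w : FreeMonoid X) : natHom T w = (invCon T).mk' (emb T w) := rfl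

/-- the canonical unit attached to `t ∈ T`. -/
def unitOf (t : ↥T) : (AdjInv T)ˣ where
  val := natHom T t.1
  inv := invElt T t
  val_inv := by
    show (invCon T).mk' (emb T t.1) * (invCon T).mk' (igen T t) = 1
    rw [← map_mul]
    have h : invCon T (emb T t.1 * igen T t) 1 := ConGen.Rel.of _ _ (InvRel.mul_inv t)
    simpa using (Con.eq _).2 h
  inv_val := by
    show (invCon T).mk' (igen T t) * (invCon T).mk' (emb T t.1) = 1
    rw [← map_mul]
    have h : invCon T (igen T t * emb T t.1) 1 := ConGen.Rel.of _ _ (InvRel.inv_mul t)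
    simpa using (Con.eq _).2 h

/-- the canonical homomorphism from the free group. -/
def phi0 (T : Set (FreeMonoid X)) : FreeGroup ↥T →* (AdjInv T)ˣ :=
  FreeGroup.lift unitOf

lemma phi0_of (t : ↥T) : phi0 T (FreeGroup.of t) = unitOf t := FreeGroup.lift_apply_of

/-- projection of a word to the quotient monoid -/
def piQ (T : Set (FreeMonoid X)) (l : Lw T) : AdjInv T := (invCon T).mk' (FreeMonoid.ofList l)

lemma piQ_append (a b : Lw T) : piQ T (a ++ b) = piQ T a * piQ T b := by
  rw [piQ, FreeMonoid.ofList_append, map_mul]; rfl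

@[simp] lemma piQ_nil : piQ T [] = 1 := map_one _

lemma piQ_embw (w : FreeMonoid X) : piQ T (embw T w) = natHom T w := rfl

lemma piQ_igen (t : ↥T) : piQ T [Sum.inr t] = invElt T t := rfl

lemma piQ_eq_iff {a b : Lw T} : piQ T a = piQ T b ↔ EqvGen (Stp T) a b := by
  rw [piQ, piQ]
  constructor
  · intro h
    have : invCon T (FreeMonoid.ofList a) (FreeMonoid.ofList b) := (Con.eq _).1 h
    simpa [FreeMonoid.toList_ofList] using invCon_iff_eqvgen.1 this
  · intro h
    refine (Con.eq _).2 (invCon_iff_eqvgen.2 ?_)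
    simpa [FreeMonoid.toList_ofList] using h

/-! ### inversion lemmas for SF -/

lemma SF.inv_inr {u : Lw T} (h : SF T u) {t : ↥T} {u₁ : Lw T}
    (he : u = Sum.inr t :: u₁) : SF T u₁ := by
  induction h with
  | nil => simp at he
  | igen t' h' _ =>
    simp only [List.cons.injEq] at he
    rwa [← he.2]
  | suf t' q s hs hqs h' _ =>
    exfalso
    rcases embw_head (T := T) hs with ⟨y, ys, hy⟩
    rw [hy] at he
    simp at he

lemma SF.inv_inl {u : Lw T} (h : SF T u) {p : FreeMonoid X} {u₁ : Lw T}
    (he : u = embw T p ++ u₁) (hp : p ≠ 1) :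
    ∃ (t : ↥T) (q s : FreeMonoid X) (u₂ : Lw T),
      s ≠ 1 ∧ q * s = t.1 ∧ u = embw T s ++ u₂ ∧ SF T u₂ := by
  induction h with
  | nil =>
    exfalso
    have := (List.append_eq_nil_iff.1 he.symm).1
    exact hp (embw_eq_nil_iff.1 this)
  | igen t h' _ =>
    exfalso
    rcases embw_head (T := T) hp with ⟨y, ys, hy⟩
    rw [hy] at he
    simp at he
  | suf t q s hs hqs h' _ =>
    exact ⟨t, q, s, _, hs, hqs, rfl, h'⟩

/-! ### the main combinatorial lemma -/

lemma pf_sf_img (hT : OverlapFree T) :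
    ∀ n (u : Lw T), u.length ≤ n → PF T u → SF T u →
      ∃ g : FreeGroup ↥T, ((phi0 T g : (AdjInv T)ˣ) : AdjInv T) = piQ T u := by
  intro n
  induction n with
  | zero =>
    intro u hlen _ _
    have : u = [] := List.eq_nil_of_length_eq_zero (by omega)
    subst this
    exact ⟨1, by simp⟩
  | succ n ih =>
    intro u hlen hPF hSF
    cases hPF with
    | nil => exact ⟨1, by simp⟩
    | igen t hu₁ =>
      rename_i u₁
      have hSF₁ : SF T u₁ := hSF.inv_inr rfl
      have hlen₁ : u₁.length ≤ n := by simp at hlen; omega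
      rcases ih u₁ hlen₁ hu₁ hSF₁ with ⟨g₁, hg₁⟩
      refine ⟨(FreeGroup.of t)⁻¹ * g₁, ?_⟩
      rw [map_mul, map_inv, phi0_of, Units.val_mul]
      have : ((unitOf t)⁻¹ : (AdjInv T)ˣ).val = invElt T t := rfl
      rw [this, hg₁]
      rw [show (Sum.inr t :: u₁ : Lw T) = [Sum.inr t] ++ u₁ from rfl, piQ_append, piQ_igen]
    | pre t p q hp hpq hu₁ =>
      rename_i u₁
      rcases hSF.inv_inl rfl hp with ⟨t', q', s, u₂, hs, hqs, he, hSF₂⟩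
      -- he : embw p ++ u₁ = embw s ++ u₂
      have heqcase : ∀ (hps : p = s) (hu : u₁ = u₂),
          ∃ g : FreeGroup ↥T, ((phi0 T g : (AdjInv T)ˣ) : AdjInv T) = piQ T (embw T p ++ u₁) := by
        intro hps hu
        subst hps; subst hu
        by_cases hqq : q = 1 ∧ q' = 1
        · -- p = t = t'
          have ht : t.1 = p := by rw [← hpq, hqq.1, mul_one]
          have hlen₁ : u₁.length ≤ n := by
            rcases embw_head (T := T) hp with ⟨y, ys, hy⟩
            rw [hy] at hlen
            simp at hlen
            omega
          rcases ih u₁ hlen₁ hu₁ (hSF₂ : SF T u₁) with ⟨g₁, hg₁⟩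
          refine ⟨FreeGroup.of t * g₁, ?_⟩
          rw [map_mul, phi0_of, Units.val_mul, hg₁, piQ_append, piQ_embw]
          congr 1
          show natHom T t.1 = natHom T p
          rw [ht]
        · exfalso
          have hor : q' ≠ 1 ∨ q ≠ 1 := by tauto
          exact ovf hT hp hor (by rw [← hqs]) (by rw [← hpq])
      rcases List.append_eq_append_iff.1 he with ⟨a', ha1, ha2⟩ | ⟨c', hc1, hc2⟩
      · -- embw s = embw p ++ a'
        rcases embw_split ha1 with ⟨v₁, v₂, hv, hv1, rfl⟩
        have hv₁ : v₁ = p := embw_injective hv1.symm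
        subst hv₁
        by_cases hv₂ : v₂ = 1
        · refine heqcase ?_ ?_
          · rw [hv, hv₂, mul_one]
          · rw [ha2, hv₂]; simp
        · exfalso
          exact walk hT hu₁ v₂ (q' * v₁) t' u₂ hv₂ (mul_ne_one_right hp)
            (by rw [mul_assoc, ← hv, hqs]) ha2
      · -- embw p = embw s ++ c'
        rcases embw_split hc1 with ⟨v₁, v₂, hv, hv1, rfl⟩
        have hv₁ : v₁ = s := embw_injective hv1.symm
        subst hv₁
        by_cases hv₂ : v₂ = 1
        · refine heqcase ?_ ?_
          · rw [hv, hv₂, mul_one]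
          · rw [hc2, hv₂]; simp
        · exfalso
          refine ovf (t := t') (t' := t) (c := v₂ * q) hT hs (Or.inr (mul_ne_one_left hv₂))
            hqs.symm ?_
          rw [← hpq, hv, mul_assoc]


/-! ### images of reduced group words -/

/-- the image word of a group word -/
def gw (T : Set (FreeMonoid X)) : List (↥T × Bool) → Lw T
  | [] => []
  | (t, true) :: L => embw T t.1 ++ gw T L
  | (t, false) :: L => Sum.inr t :: gw T L

/-- a reduced group word: no adjacent cancelling pair -/
def NoInv (L : List (↥T × Bool)) : Prop :=
  ∀ (t : ↥T) (b : Bool) (L₁ L₂ : List (↥T × Bool)), L ≠ L₁ ++ (t, b) :: (t, !b) :: L₂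

lemma noInv_tail {x : ↥T × Bool} {L : List (↥T × Bool)} (h : NoInv (x :: L)) : NoInv L := by
  intro t b L₁ L₂ he
  exact h t b (x :: L₁) L₂ (by rw [he]; rfl)

lemma redex_mem_inr {R : Lw T} (h : IsRedex T R) : ∃ s : ↥T, (Sum.inr s : X ⊕ ↥T) ∈ R := by
  rcases h with ⟨t, rfl | rfl⟩ <;> exact ⟨t, by simp⟩

lemma redex_len2 (h1 : (1 : FreeMonoid X) ∉ T) {R : Lw T} (h : IsRedex T R) : 2 ≤ R.length := by
  have wne : ∀ t : ↥T, t.1 ≠ 1 := fun t ht => h1 (ht ▸ t.2)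
  rcases h with ⟨t, rfl | rfl⟩ <;>
  · have : embw T t.1 ≠ [] := fun hh => wne t (embw_eq_nil_iff.1 hh)
    have : 0 < (embw T t.1).length := List.length_pos_iff.2 this
    simp only [List.length_append, List.length_cons, List.length_singleton]
    omega

lemma gw_prefix_embw (h1 : (1 : FreeMonoid X) ∉ T) (hT : OverlapFree T)
    {L : List (↥T × Bool)} {t : ↥T} {u₂ : Lw T}
    (h : gw T L = embw T t.1 ++ u₂) : ∃ L', L = (t, true) :: L' := by
  have wne : ∀ t : ↥T, t.1 ≠ 1 := fun t ht => h1 (ht ▸ t.2)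
  cases L with
  | nil =>
    exfalso
    have : embw T t.1 = [] := (List.append_eq_nil_iff.1 h.symm).1
    exact wne t (embw_eq_nil_iff.1 this)
  | cons x L' =>
    obtain ⟨t₁, b⟩ := x
    cases b with
    | false =>
      exfalso
      rcases embw_head (T := T) (wne t) with ⟨y, ys, hy⟩
      rw [hy] at h
      simp [gw] at h
    | true =>
      have h' : embw T t₁.1 ++ gw T L' = embw T t.1 ++ u₂ := h
      rcases List.append_eq_append_iff.1 h' with ⟨a', ha1, _⟩ | ⟨c', hc1, _⟩
      · rcases embw_split ha1 with ⟨v₁, v₂, hv, hv1, rfl⟩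
        have hv₁ : v₁ = t₁.1 := embw_injective hv1.symm
        subst hv₁
        by_cases hv₂ : v₂ = 1
        · have : t = t₁ := Subtype.ext (by rw [hv, hv₂, mul_one])
          exact ⟨L', by rw [this]⟩
        · exact absurd (ovf (t := t₁) (t' := t) hT (wne t₁) (Or.inr hv₂)
            (one_mul t₁.1).symm hv) not_false
      · rcases embw_split hc1 with ⟨v₁, v₂, hv, hv1, rfl⟩
        have hv₁ : v₁ = t.1 := embw_injective hv1.symm
        subst hv₁
        by_cases hv₂ : v₂ = 1
        · have : t = t₁ := Subtype.ext (by rw [hv, hv₂, mul_one])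
          exact ⟨L', by rw [this]⟩
        · exact absurd (ovf (t := t) (t' := t₁) hT (wne t) (Or.inr hv₂)
            (one_mul t.1).symm hv) not_false

lemma gw_head_inr (h1 : (1 : FreeMonoid X) ∉ T) {L : List (↥T × Bool)} {s : ↥T} {rest : Lw T}
    (h : gw T L = Sum.inr s :: rest) : ∃ L', L = (s, false) :: L' := by
  have wne : ∀ t : ↥T, t.1 ≠ 1 := fun t ht => h1 (ht ▸ t.2)
  cases L with
  | nil => simp [gw] at h
  | cons x L' =>
    obtain ⟨t₁, b⟩ := x
    cases b with
    | true =>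
      exfalso
      rcases embw_head (T := T) (wne t₁) with ⟨y, ys, hy⟩
      have h' : embw T t₁.1 ++ gw T L' = Sum.inr s :: rest := h
      rw [hy] at h'
      simp at h'
    | false =>
      have h' : Sum.inr t₁ :: gw T L' = Sum.inr s :: rest := h
      simp only [List.cons.injEq] at h'
      have : t₁ = s := Sum.inr.inj h'.1
      exact ⟨L', by rw [this]⟩

/-- the image of a reduced group word is a reduced word -/
lemma gw_reduced (h1 : (1 : FreeMonoid X) ∉ T) (hT : OverlapFree T) :
    ∀ L : List (↥T × Bool), NoInv L → Reduced T (gw T L) := by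
  have wne : ∀ t : ↥T, t.1 ≠ 1 := fun t ht => h1 (ht ▸ t.2)
  intro L
  induction L with
  | nil => intro _; exact reduced_nil
  | cons x L ih =>
    intro hNI
    have ihred : Reduced T (gw T L) := ih (noInv_tail hNI)
    rintro z' ⟨l, r, R, hR, he, rfl⟩
    obtain ⟨t₁, b⟩ := x
    -- treat the two kinds of head block uniformly
    have main : ∀ B₁ : Lw T, (B₁ = embw T t₁.1 ∧ b = true) ∨ (B₁ = [Sum.inr t₁] ∧ b = false) →
        B₁ ++ gw T L = l ++ R ++ r → False := by
      intro B₁ hB₁ heq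
      have he' : l ++ (R ++ r) = B₁ ++ gw T L := by
        rw [← List.append_assoc]; exact heq.symm
      rcases List.append_eq_append_iff.1 he' with ⟨a', ha1, ha2⟩ | ⟨a', ha1, ha2⟩
      · -- B₁ = l ++ a', R ++ r = a' ++ gw L
        rcases List.append_eq_append_iff.1 ha2 with ⟨k, hk1, _⟩ | ⟨bb, hbb1, hbb2⟩
        · -- a' = R ++ k : R inside B₁
          rcases hB₁ with ⟨rfl, _⟩ | ⟨rfl, _⟩
          · rcases redex_mem_inr hR with ⟨s, hs⟩
            have : (Sum.inr s : X ⊕ ↥T) ∈ embw T t₁.1 := by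
              rw [ha1, hk1]; simp [hs]
            exact not_inr_mem_embw _ _ this
          · have := redex_len2 h1 hR
            have hlen := congrArg List.length ha1
            rw [hk1] at hlen
            simp only [List.length_append, List.length_singleton] at hlen
            omega
        · -- R = a' ++ bb, gw L = bb ++ r
          rcases List.eq_nil_or_concat' a' with rfl | ⟨_, _, hane⟩
          · -- R prefix of gw L
            simp only [List.nil_append] at hbb1
            exact ihred r ⟨[], r, R, hR, by rw [hbb2, hbb1]; simp, by simp⟩
          · have hane' : a' ≠ [] := by rw [hane]; simp
            rcases List.eq_nil_or_concat' bb with rfl | ⟨_, _, hbne⟩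
            · -- R = a' inside B₁
              simp only [List.append_nil] at hbb1
              rcases hB₁ with ⟨rfl, _⟩ | ⟨rfl, _⟩
              · rcases redex_mem_inr hR with ⟨s, hs⟩
                have : (Sum.inr s : X ⊕ ↥T) ∈ embw T t₁.1 := by
                  rw [ha1]
                  simp only [List.mem_append]
                  right; rw [← hbb1]; exact hs
                exact not_inr_mem_embw _ _ this
              · have := redex_len2 h1 hR
                have hlen := congrArg List.length ha1
                rw [← hbb1] at hlen
                simp only [List.length_append, List.length_singleton] at hlen
                omega
            · have hbne' : bb ≠ [] := by rw [hbne]; simp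
              -- straddling redex
              rcases hB₁ with ⟨rfl, hb⟩ | ⟨rfl, hb⟩
              · -- positive block
                rcases embw_split ha1 with ⟨a₀, m₀, ht₁, rfl, rfl⟩
                have hm₀ : m₀ ≠ 1 := fun hh => hane' (by simp [hh])
                rcases hR with ⟨t', hA | hB⟩
                · -- A-redex
                  have hsplit : embw T m₀ ++ bb = embw T t'.1 ++ [Sum.inr t'] := by
                    rw [← hbb1, hA]
                  rcases split_sufA hbne' hsplit with ⟨w₁, w₂, hw, hm₀w, rfl⟩
                  have hw₁ : w₁ = m₀ := embw_injective hm₀w.symm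
                  subst hw₁
                  by_cases hw₂ : w₂ = 1
                  · -- t' = m₀ : check group-word reduction
                    rw [hw₂, mul_one] at hw
                    have hbbeq : gw T L = Sum.inr t' :: r := by
                      rw [hbb2, hw₂]; simp
                    rcases gw_head_inr h1 hbbeq with ⟨L', rfl⟩
                    by_cases ha₀ : a₀ = 1
                    · have : t₁ = t' := Subtype.ext (by rw [ht₁, ha₀, one_mul, hw])
                      subst this
                      exact hNI t₁ true [] L' (by rw [hb]; rfl)
                    · exact ovf (t := t₁) (t' := t') hT hm₀ (Or.inl ha₀) ht₁
                        (by rw [mul_one, hw])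
                  · exact ovf (t := t₁) (t' := t') hT hm₀ (Or.inr hw₂) ht₁ hw
                · -- B-redex head mismatch
                  rcases embw_head (T := T) hm₀ with ⟨y, ys, hy⟩
                  have : Sum.inr t' :: embw T t'.1 = embw T m₀ ++ bb := by rw [← hbb1, hB]
                  rw [hy] at this
                  simp at this
              · -- negative block [inr t₁] = l ++ a'
                have hla : l = [] ∧ a' = [Sum.inr t₁] := by
                  rcases l with _ | ⟨y, l'⟩
                  · exact ⟨rfl, by simpa using ha1.symm⟩
                  · exfalso
                    simp only [List.cons_append, List.cons.injEq] at ha1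
                    exact hane' (List.append_eq_nil_iff.1 ha1.2.symm).2
                rcases hla with ⟨rfl, rfl⟩
                rcases hR with ⟨t', hA | hB⟩
                · rcases embw_head (T := T) (wne t') with ⟨y, ys, hy⟩
                  have : embw T t'.1 ++ [Sum.inr t'] = [Sum.inr t₁] ++ bb := by rw [← hbb1, hA]
                  rw [hy] at this
                  simp at this
                · have : Sum.inr t' :: embw T t'.1 = [Sum.inr t₁] ++ bb := by rw [← hbb1, hB]
                  simp only [List.singleton_append, List.cons.injEq] at this
                  have ht' : t' = t₁ := Sum.inr.inj this.1
                  subst ht'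
                  have hgwL : gw T L = embw T t'.1 ++ r := by rw [hbb2, ← this.2]
                  rcases gw_prefix_embw h1 hT hgwL with ⟨L', rfl⟩
                  exact hNI t' false [] L' (by rw [hb]; rfl)
      · -- l = B₁ ++ a' : redex inside gw L
        exact ihred (a' ++ r) ⟨a', r, R, hR, by rw [ha2, List.append_assoc], rfl⟩
    cases b with
    | true => exact main (embw T t₁.1) (Or.inl ⟨rfl, rfl⟩) he
    | false => exact main [Sum.inr t₁] (Or.inr ⟨rfl, rfl⟩) he

lemma gw_ne_nil (h1 : (1 : FreeMonoid X) ∉ T) {L : List (↥T × Bool)} (h : L ≠ []) :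
    gw T L ≠ [] := by
  have wne : ∀ t : ↥T, t.1 ≠ 1 := fun t ht => h1 (ht ▸ t.2)
  rcases L with _ | ⟨⟨t, b⟩, L⟩
  · exact absurd rfl h
  · cases b with
    | true =>
      show embw T t.1 ++ gw T L ≠ []
      intro hh
      exact wne t (embw_eq_nil_iff.1 (List.append_eq_nil_iff.1 hh).1)
    | false => simp [gw]

lemma phi0_mk_val (L : List (↥T × Bool)) :
    ((phi0 T (FreeGroup.mk L) : (AdjInv T)ˣ) : AdjInv T) = piQ T (gw T L) := by
  induction L with
  | nil =>
    rw [show FreeGroup.mk ([] : List (↥T × Bool)) = 1 from FreeGroup.one_eq_mk.symm]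
    simp [gw]
  | cons x L ih =>
    obtain ⟨t, b⟩ := x
    have hmk : FreeGroup.mk ((t, b) :: L) = FreeGroup.mk [(t, b)] * FreeGroup.mk L := by
      rw [FreeGroup.mul_mk]; rfl
    cases b with
    | false =>
      have hneg : FreeGroup.mk [(t, false)] = (FreeGroup.of t)⁻¹ := by
        rw [show (FreeGroup.of t : FreeGroup ↥T) = FreeGroup.mk [(t, true)] from rfl,
          FreeGroup.inv_mk]
        simp [FreeGroup.invRev]
      rw [hmk, hneg, map_mul, map_inv, phi0_of, Units.val_mul, ih]
      have hval : (((unitOf t)⁻¹ : (AdjInv T)ˣ) : AdjInv T) = invElt T t := rfl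
      rw [hval, show gw T ((t, false) :: L) = [Sum.inr t] ++ gw T L from rfl, piQ_append,
        piQ_igen]
    | true =>
      rw [hmk, show FreeGroup.mk [(t, true)] = FreeGroup.of t from rfl, map_mul, phi0_of,
        Units.val_mul, ih]
      have hval : ((unitOf t : (AdjInv T)ˣ) : AdjInv T) = natHom T t.1 := rfl
      rw [hval, show gw T ((t, true) :: L) = embw T t.1 ++ gw T L from rfl, piQ_append,
        piQ_embw]

lemma rtg_eqv {a b : Lw T} (h : Relation.ReflTransGen (Stp T) a b) : EqvGen (Stp T) a b := by
  induction h with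
  | refl => exact EqvGen.refl _
  | tail _ hbc ih => exact EqvGen.trans _ _ _ ih (EqvGen.rel _ _ hbc)

end Development

/-- the group of units of `⟨X : i(T)⟩` is free on `T`: the homomorphism
from the free group on `T` sending each generator `t` to the image of `t` is an
isomorphism of groups. -/
theorem stmt9 (X : Type*) (T : Set (FreeMonoid X))
    (h1 : (1 : FreeMonoid X) ∉ T) (hT : OverlapFree T) :
    ∃ φ : FreeGroup T ≃* (AdjInv T)ˣ,
      ∀ t : T, ((φ (FreeGroup.of t) : (AdjInv T)ˣ) : AdjInv T) = natHom T t.1 := by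
  classical
  have hinj : Function.Injective (phi0 T) := by
    rw [injective_iff_map_eq_one]
    intro g hg
    have hval : piQ T (gw T g.toWord) = piQ T [] := by
      rw [← phi0_mk_val, FreeGroup.mk_toWord, hg, piQ_nil, Units.val_one]
    have heqv := piQ_eq_iff.1 hval
    have hred : Reduced T (gw T g.toWord) := by
      refine gw_reduced h1 hT _ ?_
      intro t b L₁ L₂ heq
      have hred2 : FreeGroup.reduce g.toWord = L₁ ++ (t, b) :: (t, !b) :: L₂ := by
        rw [FreeGroup.reduce_toWord]; exact heq
      exact FreeGroup.reduce.not hred2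
    have hnil : gw T g.toWord = [] := reduced_eqv_eq h1 hT hred reduced_nil heqv
    have hLnil : g.toWord = [] := by
      by_contra hLne
      exact gw_ne_nil h1 hLne hnil
    exact FreeGroup.toWord_eq_nil_iff.1 hLnil
  have hsurj : Function.Surjective (phi0 T) := by
    intro μ
    obtain ⟨z, hz⟩ := Con.mk'_surjective (c := invCon T) ((μ : (AdjInv T)ˣ) : AdjInv T)
    obtain ⟨zi, hzi⟩ := Con.mk'_surjective (c := invCon T) ((μ⁻¹ : (AdjInv T)ˣ) : AdjInv T)
    obtain ⟨u, hured, hu⟩ := exists_reduced (T := T) (FreeMonoid.toList z)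
    obtain ⟨v, hvred, hv⟩ := exists_reduced (T := T) (FreeMonoid.toList zi)
    have hπz : piQ T (FreeMonoid.toList z) = ((μ : (AdjInv T)ˣ) : AdjInv T) := by
      show (invCon T).mk' (FreeMonoid.ofList (FreeMonoid.toList z)) = _
      rw [FreeMonoid.ofList_toList]; exact hz
    have hπzi : piQ T (FreeMonoid.toList zi) = ((μ⁻¹ : (AdjInv T)ˣ) : AdjInv T) := by
      show (invCon T).mk' (FreeMonoid.ofList (FreeMonoid.toList zi)) = _
      rw [FreeMonoid.ofList_toList]; exact hzi
    have hπu : piQ T u = ((μ : (AdjInv T)ˣ) : AdjInv T) := by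
      rw [← piQ_eq_iff.2 (rtg_eqv hu)]; exact hπz
    have hπv : piQ T v = ((μ⁻¹ : (AdjInv T)ˣ) : AdjInv T) := by
      rw [← piQ_eq_iff.2 (rtg_eqv hv)]; exact hπzi
    have huv : Relation.EqvGen (Stp T) (u ++ v) [] := by
      apply piQ_eq_iff.1
      rw [piQ_append, hπu, hπv, piQ_nil, Units.mul_inv]
    have hvu : Relation.EqvGen (Stp T) (v ++ u) [] := by
      apply piQ_eq_iff.1
      rw [piQ_append, hπu, hπv, piQ_nil, Units.inv_mul]
    have hPF := right_inv_PF h1 hT (u.length + v.length) u v le_rfl hured hvred huv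
    have hSF := left_inv_SF h1 hT (v.length + u.length) v u le_rfl hvred hured hvu
    obtain ⟨g, hg⟩ := pf_sf_img hT u.length u le_rfl hPF hSF
    exact ⟨g, Units.ext (by rw [hg, hπu])⟩
  refine ⟨MulEquiv.ofBijective (phi0 T) ⟨hinj, hsurj⟩, fun t => ?_⟩
  show ((phi0 T (FreeGroup.of t) : (AdjInv T)ˣ) : AdjInv T) = natHom T t.1; rw [phi0_of]
  rfl

end AdjoinInverses
end

section
/- Let X be a set and T an overlap-free subset of ⟨X⟩\{1}. Then T is precisely the set of nonidentity elements w of ⟨X⟩ which become invertible in ⟨X : i(T)⟩ but admit no factorization w = uv into two nonidentity elements u, v of ⟨X⟩ both of which become invertible in ⟨X : i(T)⟩. -/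
namespace AdjoinInverses

variable {X : Type*}

/-! ### Free monoid helpers -/

theorem fm_split {α : Type*} {a b c d : FreeMonoid α} (h : a * b = c * d) :
    (∃ e, c = a * e ∧ b = e * d) ∨ (∃ e, a = c * e ∧ d = e * b) := by
  have h' : a.toList ++ b.toList = c.toList ++ d.toList := by
    simpa [FreeMonoid.toList_mul] using congrArg FreeMonoid.toList h
  rcases List.append_eq_append_iff.mp h' with ⟨e, he1, he2⟩ | ⟨e, he1, he2⟩
  · left
    exact ⟨FreeMonoid.ofList e, FreeMonoid.toList.injective (by simpa using he1),
      FreeMonoid.toList.injective (by simpa using he2)⟩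
  · right
    exact ⟨FreeMonoid.ofList e, FreeMonoid.toList.injective (by simpa using he1),
      FreeMonoid.toList.injective (by simpa using he2)⟩

theorem fm_mul_eq_one {α : Type*} {a b : FreeMonoid α} (h : a * b = 1) : a = 1 ∧ b = 1 := by
  have h' : a.toList ++ b.toList = [] := by
    simpa [FreeMonoid.toList_mul] using congrArg FreeMonoid.toList h
  rcases List.append_eq_nil_iff.mp h' with ⟨h1, h2⟩
  exact ⟨FreeMonoid.toList.injective (by simpa using h1),
    FreeMonoid.toList.injective (by simpa using h2)⟩

theorem fm_mul_eq_of {α : Type*} {e c : FreeMonoid α} {x : α} (h : e * c = FreeMonoid.of x) :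
    (e = 1 ∧ c = FreeMonoid.of x) ∨ (e = FreeMonoid.of x ∧ c = 1) := by
  have hl := congrArg FreeMonoid.length h
  rw [FreeMonoid.length_mul, FreeMonoid.length_of] at hl
  rcases Nat.add_eq_one_iff.mp hl with ⟨he, hc⟩ | ⟨he, hc⟩
  · left
    have he' : e = 1 := FreeMonoid.length_eq_zero.mp he
    refine ⟨he', ?_⟩
    rw [he', one_mul] at h; exact h
  · right
    have hc' : c = 1 := FreeMonoid.length_eq_zero.mp hc
    refine ⟨?_, hc'⟩
    rw [hc', mul_one] at h; exact h

theorem fm_exists_concat {α : Type*} {a : FreeMonoid α} (h : a ≠ 1) :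
    ∃ (b : FreeMonoid α) (x : α), a = b * FreeMonoid.of x := by
  rcases List.eq_nil_or_concat a.toList with hn | ⟨l, x, hl⟩
  · exact absurd (FreeMonoid.toList.injective (by simpa using hn)) h
  · exact ⟨FreeMonoid.ofList l, x, FreeMonoid.toList.injective (by simpa using hl)⟩

section Machine

variable (T : Set (FreeMonoid X))

/-- Reversed block representation : `(r, [(t_k, ρ_k), ..., (t_1, ρ_1)])` represents the word
`emb r * igen t_1 * emb ρ_1 * ... * igen t_k * emb ρ_k`. -/
abbrev Wd := FreeMonoid X × List (↥T × FreeMonoid X)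

def lastRun : FreeMonoid X → List (↥T × FreeMonoid X) → FreeMonoid X
  | r, [] => r
  | _, (_, ρ) :: _ => ρ

def RedR : FreeMonoid X → List (↥T × FreeMonoid X) → Prop
  | _, [] => True
  | r, (t, ρ) :: L => (¬ ∃ c, lastRun T r L = c * (t : FreeMonoid X)) ∧
      (¬ ∃ c, ρ = (t : FreeMonoid X) * c) ∧ RedR r L

def decodeW : FreeMonoid X → List (↥T × FreeMonoid X) → FreeMonoid (X ⊕ T)
  | r, [] => emb T r
  | r, (t, ρ) :: L => decodeW r L * igen T t * emb T ρ

open scoped Classical in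
noncomputable def rawAct : (X ⊕ ↥T) → Wd T → Wd T
  | Sum.inl x, (r, []) => (r * FreeMonoid.of x, [])
  | Sum.inl x, (r, (t, ρ) :: L) =>
      if (t : FreeMonoid X) = ρ * FreeMonoid.of x then (r, L)
      else (r, (t, ρ * FreeMonoid.of x) :: L)
  | Sum.inr t, (r, []) =>
      if h : ∃ c, r = c * (t : FreeMonoid X) then (h.choose, []) else (r, [(t, 1)])
  | Sum.inr t, (r, (s, ρ) :: L) =>
      if h : ∃ c, ρ = c * (t : FreeMonoid X) then (r, (s, h.choose) :: L)
      else (r, (t, 1) :: (s, ρ) :: L)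

variable {T}

theorem rawAct_red (h1 : (1 : FreeMonoid X) ∉ T) (a : X ⊕ ↥T) (r : FreeMonoid X)
    (L : List (↥T × FreeMonoid X)) (h : RedR T r L) :
    RedR T (rawAct T a (r, L)).1 (rawAct T a (r, L)).2 := by
  have hone : ∀ t : ↥T, ¬ ∃ c, (1 : FreeMonoid X) = (t : FreeMonoid X) * c := by
    rintro t ⟨c, hc⟩
    have ht : (t : FreeMonoid X) = 1 := (fm_mul_eq_one hc.symm).1
    exact h1 (ht ▸ t.2)
  match a, L with
  | Sum.inl x, [] => simp [rawAct, RedR]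
  | Sum.inl x, (t, ρ) :: L =>
      by_cases hf : (t : FreeMonoid X) = ρ * FreeMonoid.of x
      · rw [rawAct, if_pos hf]
        exact h.2.2
      · rw [rawAct, if_neg hf]
        refine ⟨h.1, ?_, h.2.2⟩
        rintro ⟨c, hc⟩
        rcases fm_split hc with ⟨e, he1, he2⟩ | ⟨e, he1, he2⟩
        · rcases fm_mul_eq_of he2.symm with ⟨hee, hcc⟩ | ⟨hee, hcc⟩
          · exact h.2.1 ⟨1, by rw [hee, mul_one] at he1; rw [mul_one, he1]⟩
          · exact hf (by rw [he1, hee])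
        · exact h.2.1 ⟨e, he1⟩
  | Sum.inr t, [] =>
      by_cases hf : ∃ c, r = c * (t : FreeMonoid X)
      · rw [rawAct, dif_pos hf]; trivial
      · rw [rawAct, dif_neg hf]
        exact ⟨hf, hone t, trivial⟩
  | Sum.inr t, (s, ρ) :: L =>
      by_cases hf : ∃ c, ρ = c * (t : FreeMonoid X)
      · rw [rawAct, dif_pos hf]
        refine ⟨h.1, ?_, h.2.2⟩
        rintro ⟨c, hc⟩
        exact h.2.1 ⟨c * (t : FreeMonoid X), by rw [hf.choose_spec, hc, mul_assoc]⟩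
      · rw [rawAct, dif_neg hf]
        exact ⟨hf, hone t, h⟩

end Machine

section Machine2
variable {T : Set (FreeMonoid X)}

variable (T) in
noncomputable def vActL (l : List (X ⊕ ↥T)) (w : Wd T) : Wd T := l.foldl (fun w a => rawAct T a w) w

@[simp] theorem vActL_nil (w : Wd T) : vActL T [] w = w := rfl

theorem vActL_cons (a : X ⊕ ↥T) (l : List (X ⊕ ↥T)) (w : Wd T) :
    vActL T (a :: l) w = vActL T l (rawAct T a w) := rfl

theorem vActL_append (l1 l2 : List (X ⊕ ↥T)) (w : Wd T) :
    vActL T (l1 ++ l2) w = vActL T l2 (vActL T l1 w) := List.foldl_append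

theorem vActL_single (a : X ⊕ ↥T) (w : Wd T) : vActL T [a] w = rawAct T a w := rfl

theorem apInl0 (z : List X) : ∀ r : FreeMonoid X,
    vActL T (z.map Sum.inl) (r, []) = (r * FreeMonoid.ofList z, []) := by
  induction z with
  | nil => intro r; simp
  | cons x z ih =>
    intro r
    rw [List.map_cons, vActL_cons]
    show vActL T (z.map Sum.inl) (r * FreeMonoid.of x, []) = _
    rw [ih (r * FreeMonoid.of x), FreeMonoid.ofList_cons, mul_assoc]

theorem apInl (z : List X) : ∀ (ρ : FreeMonoid X) (r : FreeMonoid X) (s : ↥T)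
    (L : List (↥T × FreeMonoid X)),
    (¬ ∃ c, ρ * FreeMonoid.ofList z = (s : FreeMonoid X) * c) →
    vActL T (z.map Sum.inl) (r, (s, ρ) :: L) = (r, (s, ρ * FreeMonoid.ofList z) :: L) := by
  induction z with
  | nil => intro ρ r s L _; simp
  | cons x z ih =>
    intro ρ r s L hcond
    have hfire : ¬ (s : FreeMonoid X) = ρ * FreeMonoid.of x := by
      intro hf
      exact hcond ⟨FreeMonoid.ofList z, by
        rw [hf, FreeMonoid.ofList_cons, ← mul_assoc]⟩
    rw [List.map_cons, vActL_cons, rawAct, if_neg hfire, ih (ρ * FreeMonoid.of x) r s L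
      (by rw [mul_assoc, ← FreeMonoid.ofList_cons]; exact hcond)]
    rw [mul_assoc, ← FreeMonoid.ofList_cons]

theorem actInr_neg (t : ↥T) (r : FreeMonoid X) (L : List (↥T × FreeMonoid X))
    (h : ¬ ∃ c, lastRun T r L = c * (t : FreeMonoid X)) :
    rawAct T (Sum.inr t) (r, L) = (r, (t, 1) :: L) := by
  match L with
  | [] => rw [rawAct, dif_neg (show ¬ ∃ c, r = c * (t : FreeMonoid X) from h)]
  | (s, ρ) :: L' => rw [rawAct, dif_neg (show ¬ ∃ c, ρ = c * (t : FreeMonoid X) from h)]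

theorem actInr_pos_nil (t : ↥T) (r c : FreeMonoid X) (h : r = c * (t : FreeMonoid X)) :
    rawAct T (Sum.inr t) (r, ([] : List (↥T × FreeMonoid X))) = (c, []) := by
  have hex : ∃ c, r = c * (t : FreeMonoid X) := ⟨c, h⟩
  rw [rawAct, dif_pos hex]
  have hs := hex.choose_spec
  have : hex.choose = c := mul_right_cancel (hs.symm.trans h)
  rw [this]

theorem actInr_pos_cons (t s : ↥T) (ρ c : FreeMonoid X) (r : FreeMonoid X)
    (L : List (↥T × FreeMonoid X)) (h : ρ = c * (t : FreeMonoid X)) :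
    rawAct T (Sum.inr t) (r, (s, ρ) :: L) = (r, (s, c) :: L) := by
  have hex : ∃ c, ρ = c * (t : FreeMonoid X) := ⟨c, h⟩
  rw [rawAct, dif_pos hex]
  have hs := hex.choose_spec
  have : hex.choose = c := mul_right_cancel (hs.symm.trans h)
  rw [this]

theorem actInl_pos (x : X) (t : ↥T) (ρ : FreeMonoid X) (r : FreeMonoid X)
    (L : List (↥T × FreeMonoid X)) (h : (t : FreeMonoid X) = ρ * FreeMonoid.of x) :
    rawAct T (Sum.inl x) (r, (t, ρ) :: L) = (r, L) := by
  rw [rawAct, if_pos h]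

theorem coe_ne_one (h1 : (1 : FreeMonoid X) ∉ T) (t : ↥T) : (t : FreeMonoid X) ≠ 1 := by
  intro h; exact h1 (h ▸ t.2)

theorem R1 (h1 : (1 : FreeMonoid X) ∉ T) (hT : OverlapFree T) (t : ↥T) (r : FreeMonoid X)
    (L : List (↥T × FreeMonoid X)) (h : RedR T r L) :
    vActL T ((t : FreeMonoid X).toList.map Sum.inl ++ [Sum.inr t]) (r, L) = (r, L) := by
  rw [vActL_append]
  match L, h with
  | [], _ =>
    rw [apInl0, FreeMonoid.ofList_toList, vActL_single, actInr_pos_nil t (r * (t : FreeMonoid X)) r rfl]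
  | (s, ρ) :: L', h =>
    by_cases hc : ∃ c, ρ * (t : FreeMonoid X) = (s : FreeMonoid X) * c
    · obtain ⟨c, hc⟩ := hc
      rcases fm_split hc with ⟨e, he1, he2⟩ | ⟨e, he1, he2⟩
      · -- he1 : ↑s = ρ * e, he2 : ↑t = e * c
        by_cases he : e = 1
        · refine absurd ⟨1, ?_⟩ h.2.1
          rw [mul_one]
          rw [he, mul_one] at he1
          exact he1.symm
        by_cases hcc : c = 1
        · rw [hcc, mul_one] at he2
          by_cases hρ : ρ = 1
          · -- main case : s = t, ρ = 1
            have hst : s = t := Subtype.ext (by rw [he1, hρ, one_mul, he2])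
            subst hst; subst hρ
            obtain ⟨t', y, hty⟩ := fm_exists_concat (coe_ne_one h1 s)
            have htl : (s : FreeMonoid X).toList = t'.toList ++ [y] := by
              rw [hty]; rfl
            rw [htl, List.map_append, vActL_append]
            have hlen : ¬ ∃ c, (1 : FreeMonoid X) * FreeMonoid.ofList t'.toList
                = (s : FreeMonoid X) * c := by
              rintro ⟨c, hcon⟩
              have h1l := congrArg FreeMonoid.length hcon
              have h2l := congrArg FreeMonoid.length hty
              simp [FreeMonoid.length_mul] at h1l h2l
              omega
            rw [apInl _ _ _ _ _ hlen, List.map_singleton, vActL_single (Sum.inl y),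
              actInl_pos y s (1 * FreeMonoid.ofList t'.toList) r L'
                (by rw [FreeMonoid.ofList_toList, one_mul, ← hty]),
              vActL_single (Sum.inr s), actInr_neg s r L' h.1]
          · exact absurd ⟨ρ, (t : FreeMonoid X), 1, coe_ne_one h1 t, Or.inl hρ,
              by rw [he1, he2], (mul_one _).symm⟩ (hT _ s.2 _ t.2)
        · exact absurd ⟨ρ, e, c, he, Or.inr hcc, he1, he2⟩ (hT _ s.2 _ t.2)
      · exact absurd ⟨e, he1⟩ h.2.1
    · have := apInl ((t : FreeMonoid X).toList) ρ r s L'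
        (by rw [FreeMonoid.ofList_toList]; exact hc)
      rw [this, vActL_single, FreeMonoid.ofList_toList, actInr_pos_cons t s (ρ * (t : FreeMonoid X)) ρ r L' rfl]

theorem R2 (h1 : (1 : FreeMonoid X) ∉ T) (t : ↥T) (r : FreeMonoid X)
    (L : List (↥T × FreeMonoid X)) (h : RedR T r L) :
    vActL T (Sum.inr t :: (t : FreeMonoid X).toList.map Sum.inl) (r, L) = (r, L) := by
  rw [vActL_cons]
  by_cases hf : ∃ c, lastRun T r L = c * (t : FreeMonoid X)
  · obtain ⟨c, hc⟩ := hf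
    match L, h with
    | [], _ =>
      rw [show lastRun T r [] = r from rfl] at hc
      rw [actInr_pos_nil t r c hc, apInl0, FreeMonoid.ofList_toList, ← hc]
    | (s, ρ) :: L', h =>
      rw [show lastRun T r ((s,ρ)::L') = ρ from rfl] at hc
      rw [actInr_pos_cons t s ρ c r L' hc]
      have := apInl ((t : FreeMonoid X).toList) c r s L'
        (by rw [FreeMonoid.ofList_toList, ← hc]; exact h.2.1)
      rw [this, FreeMonoid.ofList_toList, ← hc]
  · rw [actInr_neg t r L hf]
    obtain ⟨t', y, hty⟩ := fm_exists_concat (coe_ne_one h1 t)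
    have htl : (t : FreeMonoid X).toList = t'.toList ++ [y] := by rw [hty]; rfl
    rw [htl, List.map_append, vActL_append]
    have hlen : ¬ ∃ c, (1 : FreeMonoid X) * FreeMonoid.ofList t'.toList
        = (t : FreeMonoid X) * c := by
      rintro ⟨c, hcon⟩
      have h1l := congrArg FreeMonoid.length hcon
      have h2l := congrArg FreeMonoid.length hty
      simp [FreeMonoid.length_mul] at h1l h2l
      omega
    rw [apInl _ _ _ _ _ hlen, List.map_singleton, vActL_single (Sum.inl y),
      actInl_pos y t (1 * FreeMonoid.ofList t'.toList) r L
        (by rw [FreeMonoid.ofList_toList, one_mul, ← hty])]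

variable (T) in
def NW := {w : Wd T // RedR T w.1 w.2}

noncomputable def act (h1 : (1 : FreeMonoid X) ∉ T) (a : X ⊕ ↥T) (n : NW T) : NW T :=
  ⟨rawAct T a n.1, rawAct_red h1 a n.1.1 n.1.2 n.2⟩

noncomputable def actL (h1 : (1 : FreeMonoid X) ∉ T) (l : List (X ⊕ ↥T)) (n : NW T) : NW T :=
  l.foldl (fun n a => act h1 a n) n

theorem actL_val (h1 : (1 : FreeMonoid X) ∉ T) (l : List (X ⊕ ↥T)) : ∀ n : NW T,
    (actL h1 l n).1 = vActL T l n.1 := by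
  induction l with
  | nil => intro n; rfl
  | cons a l ih =>
    intro n
    show (actL h1 l (act h1 a n)).1 = _
    rw [ih (act h1 a n), vActL_cons]; rfl

noncomputable def psi (h1 : (1 : FreeMonoid X) ∉ T) :
    FreeMonoid (X ⊕ ↥T) →* (Function.End (NW T))ᵐᵒᵖ where
  toFun u := MulOpposite.op (fun n => actL h1 u.toList n)
  map_one' := rfl
  map_mul' u v := MulOpposite.unop_injective (funext fun n => by
    show actL h1 (u * v).toList n = actL h1 v.toList (actL h1 u.toList n)
    rw [FreeMonoid.toList_mul]
    exact List.foldl_append)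

theorem hker (h1 : (1 : FreeMonoid X) ∉ T) (hT : OverlapFree T) :
    invCon T ≤ Con.ker (psi h1) := by
  have : conGen (InvRel T) ≤ Con.ker (psi h1) := by
    apply Con.conGen_le.mpr
    rintro x y (⟨t⟩ | ⟨t⟩) <;> rw [Con.ker_rel] <;>
      refine MulOpposite.unop_injective (funext fun n => ?_) <;>
      apply Subtype.ext
    · show (actL h1 (emb T ↑t * igen T t).toList n).1 = (actL h1 (1 : FreeMonoid (X ⊕ ↥T)).toList n).1
      rw [actL_val, actL_val]
      have htl : (emb T ↑t * igen T t).toList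
          = (t : FreeMonoid X).toList.map Sum.inl ++ [Sum.inr t] := rfl
      rw [htl]
      show vActL T _ (n.1.1, n.1.2) = vActL T (1 : FreeMonoid (X ⊕ ↥T)).toList (n.1.1, n.1.2)
      rw [R1 h1 hT t n.1.1 n.1.2 n.2]
      rfl
    · show (actL h1 (igen T t * emb T ↑t).toList n).1 = (actL h1 (1 : FreeMonoid (X ⊕ ↥T)).toList n).1
      rw [actL_val, actL_val]
      have htl : (igen T t * emb T ↑t).toList
          = Sum.inr t :: (t : FreeMonoid X).toList.map Sum.inl := rfl
      rw [htl]
      show vActL T _ (n.1.1, n.1.2) = vActL T (1 : FreeMonoid (X ⊕ ↥T)).toList (n.1.1, n.1.2)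
      rw [R2 h1 t n.1.1 n.1.2 n.2]
      rfl
  exact this


end Machine2
section Machine3
variable {T : Set (FreeMonoid X)}

theorem apDecode (L : List (↥T × FreeMonoid X)) : ∀ r : FreeMonoid X, RedR T r L →
    vActL T (decodeW T r L).toList ((1 : FreeMonoid X), ([] : List (↥T × FreeMonoid X)))
      = (r, L) := by
  induction L with
  | nil =>
    intro r _
    have h0 : (decodeW T r []).toList = r.toList.map Sum.inl := rfl
    rw [h0, apInl0]
    simp
  | cons p L ih =>
    obtain ⟨t, ρ⟩ := p
    intro r h
    have hdt : (decodeW T r ((t,ρ)::L)).toList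
        = (decodeW T r L).toList ++ ([Sum.inr t] ++ ρ.toList.map Sum.inl) := by
      show ((decodeW T r L * igen T t) * emb T ρ).toList = _
      rw [FreeMonoid.toList_mul, FreeMonoid.toList_mul, List.append_assoc]
      rfl
    rw [hdt, vActL_append, vActL_append, ih r h.2.2, vActL_single, actInr_neg t r L h.1]
    have h3 := apInl (ρ.toList) 1 r t L
      (by rw [FreeMonoid.ofList_toList, one_mul]; exact h.2.1)
    rw [h3, FreeMonoid.ofList_toList, one_mul]

variable (T) in
noncomputable def oneNW : NW T := ⟨((1 : FreeMonoid X), []), trivial⟩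

noncomputable def PsiQ (h1 : (1 : FreeMonoid X) ∉ T) (hT : OverlapFree T) :
    (invCon T).Quotient → NW T :=
  fun q => (MulOpposite.unop ((invCon T).lift (psi h1) (hker h1 hT) q)) (oneNW T)

theorem PsiQ_coe (h1 : (1 : FreeMonoid X) ∉ T) (hT : OverlapFree T)
    (u : FreeMonoid (X ⊕ ↥T)) :
    PsiQ h1 hT (u : (invCon T).Quotient) = actL h1 u.toList (oneNW T) := by
  show MulOpposite.unop ((invCon T).lift (psi h1) (hker h1 hT) ↑u) (oneNW T) = _
  rw [Con.lift_coe]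
  rfl

theorem red_unique (h1 : (1 : FreeMonoid X) ∉ T) (hT : OverlapFree T)
    {r r' : FreeMonoid X} {L L' : List (↥T × FreeMonoid X)}
    (h : RedR T r L) (h' : RedR T r' L')
    (hc : invCon T (decodeW T r L) (decodeW T r' L')) : r = r' ∧ L = L' := by
  have hq : ((decodeW T r L : FreeMonoid (X ⊕ ↥T)) : (invCon T).Quotient)
      = ((decodeW T r' L' : FreeMonoid (X ⊕ ↥T)) : (invCon T).Quotient) := ((invCon T).eq).mpr hc
  have h2 := congrArg (PsiQ h1 hT) hq
  rw [PsiQ_coe, PsiQ_coe] at h2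
  have h3 := congrArg Subtype.val h2
  rw [actL_val, actL_val] at h3
  have h4 : (r, L) = (r', L') := by
    rw [← apDecode L r h, ← apDecode L' r' h']
    exact h3
  exact ⟨congrArg Prod.fst h4, congrArg Prod.snd h4⟩

theorem rel_mul_inv (t : ↥T) : invCon T (emb T ↑t * igen T t) 1 :=
  ConGen.Rel.of _ _ (InvRel.mul_inv t)

theorem rel_inv_mul (t : ↥T) : invCon T (igen T t * emb T ↑t) 1 :=
  ConGen.Rel.of _ _ (InvRel.inv_mul t)

theorem qrel1 (t : ↥T) :
    ((emb T ↑t : FreeMonoid (X ⊕ ↥T)) : (invCon T).Quotient) * ↑(igen T t) = 1 := by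
  rw [← Con.coe_mul, ← Con.coe_one]
  exact ((invCon T).eq).mpr (rel_mul_inv t)

theorem qrel2 (t : ↥T) :
    ((igen T t : FreeMonoid (X ⊕ ↥T)) : (invCon T).Quotient) * ↑(emb T ↑t) = 1 := by
  rw [← Con.coe_mul, ← Con.coe_one]
  exact ((invCon T).eq).mpr (rel_inv_mul t)

theorem act_cong (a : X ⊕ ↥T) (w : Wd T) :
    ((decodeW T (rawAct T a w).1 (rawAct T a w).2 : FreeMonoid (X ⊕ ↥T)) : (invCon T).Quotient)
      = ↑(decodeW T w.1 w.2 * FreeMonoid.of a) := by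
  obtain ⟨r, L⟩ := w
  have eof : ∀ x : X, emb T (FreeMonoid.of x) = FreeMonoid.of (Sum.inl x) := fun _ => rfl
  match a, L with
  | Sum.inl x, [] =>
    apply congrArg
    show emb T (r * FreeMonoid.of x) = emb T r * FreeMonoid.of (Sum.inl x)
    rw [map_mul, eof]
  | Sum.inl x, (t, ρ) :: L =>
    by_cases hf : (t : FreeMonoid X) = ρ * FreeMonoid.of x
    · rw [rawAct, if_pos hf]
      have e1 : decodeW T r ((t,ρ)::L) * FreeMonoid.of (Sum.inl x)
          = decodeW T r L * (igen T t * emb T ↑t) := by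
        show decodeW T r L * igen T t * emb T ρ * FreeMonoid.of (Sum.inl x) = _
        rw [hf, map_mul, eof]
        simp [mul_assoc]
      show ((decodeW T r L : FreeMonoid (X ⊕ ↥T)) : (invCon T).Quotient) = _
      rw [e1, Con.coe_mul, Con.coe_mul, qrel2 t, mul_one]
    · rw [rawAct, if_neg hf]
      apply congrArg
      show decodeW T r L * igen T t * emb T (ρ * FreeMonoid.of x)
          = decodeW T r L * igen T t * emb T ρ * FreeMonoid.of (Sum.inl x)
      rw [map_mul, eof]
      simp [mul_assoc]
  | Sum.inr t, [] =>
    by_cases hf : ∃ c, r = c * (t : FreeMonoid X)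
    · obtain ⟨c0, hs⟩ := hf
      rw [actInr_pos_nil t r c0 hs, hs]
      have e1 : decodeW T (c0 * (t : FreeMonoid X)) [] * FreeMonoid.of (Sum.inr t)
          = decodeW T c0 [] * (emb T ↑t * igen T t) := by
        show emb T (c0 * (t : FreeMonoid X)) * FreeMonoid.of (Sum.inr t)
            = emb T c0 * (emb T ↑t * igen T t)
        rw [map_mul, show FreeMonoid.of (Sum.inr t) = igen T t from rfl]
        simp [mul_assoc]
      rw [e1, Con.coe_mul, Con.coe_mul, qrel1 t, mul_one]
    · rw [rawAct, dif_neg hf]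
      apply congrArg
      show decodeW T r [] * igen T t * emb T 1 = decodeW T r [] * FreeMonoid.of (Sum.inr t)
      rw [map_one, mul_one]
      rfl
  | Sum.inr t, (s, ρ) :: L =>
    by_cases hf : ∃ c, ρ = c * (t : FreeMonoid X)
    · obtain ⟨c0, hs⟩ := hf
      rw [actInr_pos_cons t s ρ c0 r L hs, hs]
      have e1 : decodeW T r ((s, c0 * (t : FreeMonoid X))::L) * FreeMonoid.of (Sum.inr t)
          = decodeW T r ((s, c0)::L) * (emb T ↑t * igen T t) := by
        show decodeW T r L * igen T s * emb T (c0 * (t : FreeMonoid X))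
            * FreeMonoid.of (Sum.inr t)
            = decodeW T r L * igen T s * emb T c0 * (emb T ↑t * igen T t)
        rw [map_mul, show FreeMonoid.of (Sum.inr t) = igen T t from rfl]
        simp [mul_assoc]
      rw [e1, Con.coe_mul, Con.coe_mul, qrel1 t, mul_one]
    · rw [rawAct, dif_neg hf]
      apply congrArg
      show decodeW T r ((s,ρ)::L) * igen T t * emb T 1
          = decodeW T r ((s,ρ)::L) * FreeMonoid.of (Sum.inr t)
      rw [map_one, mul_one]
      rfl

theorem decode_vActL (l : List (X ⊕ ↥T)) : ∀ w : Wd T,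
    ((decodeW T (vActL T l w).1 (vActL T l w).2 : FreeMonoid (X ⊕ ↥T)) : (invCon T).Quotient)
      = ↑(decodeW T w.1 w.2 * FreeMonoid.ofList l) := by
  induction l with
  | nil =>
    intro w
    rw [vActL_nil]
    apply congrArg
    rw [FreeMonoid.ofList_nil, mul_one]
  | cons a l ih =>
    intro w
    rw [vActL_cons, ih (rawAct T a w), Con.coe_mul, act_cong a w, ← Con.coe_mul,
      FreeMonoid.ofList_cons, ← mul_assoc]

theorem decode_PsiQ (h1 : (1 : FreeMonoid X) ∉ T) (hT : OverlapFree T)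
    (u : FreeMonoid (X ⊕ ↥T)) :
    ((decodeW T (PsiQ h1 hT ↑u).1.1 (PsiQ h1 hT ↑u).1.2 : FreeMonoid (X ⊕ ↥T))
      : (invCon T).Quotient) = ↑u := by
  rw [PsiQ_coe, actL_val]
  show ((decodeW T (vActL T u.toList ((1 : FreeMonoid X), [])).1
      (vActL T u.toList ((1 : FreeMonoid X), [])).2 : FreeMonoid (X ⊕ ↥T))
      : (invCon T).Quotient) = ↑u
  rw [decode_vActL u.toList ((1 : FreeMonoid X), ([] : List (↥T × FreeMonoid X)))]
  have hone : decodeW T (1 : FreeMonoid X) [] = 1 := map_one (emb T)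
  rw [hone, one_mul, FreeMonoid.ofList_toList]


end Machine3
section Machine4
variable {T : Set (FreeMonoid X)}

theorem decode_wordSnoc (A : List (↥T × FreeMonoid X)) : ∀ (r : FreeMonoid X) (t : ↥T)
    (ρ : FreeMonoid X), decodeW T r (A ++ [(t,ρ)]) = emb T r * igen T t * decodeW T ρ A := by
  induction A with
  | nil => intro r t ρ; rfl
  | cons p A ih =>
    obtain ⟨s, σ⟩ := p
    intro r t ρ
    show decodeW T r (A ++ [(t,ρ)]) * igen T s * emb T σ = _
    rw [ih r t ρ]
    show _ = emb T r * igen T t * (decodeW T ρ A * igen T s * emb T σ)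
    simp [mul_assoc]

theorem lastRun_wordSnoc (A : List (↥T × FreeMonoid X)) (r ρ : FreeMonoid X) (t : ↥T) :
    lastRun T r (A ++ [(t,ρ)]) = lastRun T ρ A := by
  cases A with
  | nil => rfl
  | cons p A => obtain ⟨s, σ⟩ := p; rfl

theorem RedR_wordSnoc (A : List (↥T × FreeMonoid X)) : ∀ (r ρ : FreeMonoid X) (t : ↥T),
    RedR T r (A ++ [(t,ρ)]) ↔
      (¬ ∃ c, r = c * (t : FreeMonoid X)) ∧ (¬ ∃ c, ρ = (t : FreeMonoid X) * c)
        ∧ RedR T ρ A := by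
  induction A with
  | nil =>
    intro r ρ t
    show (¬ ∃ c, lastRun T r [] = c * (t : FreeMonoid X)) ∧ _ ∧ True ↔ _
    show (¬ ∃ c, r = c * (t : FreeMonoid X)) ∧ _ ∧ True ↔ _
    constructor
    · rintro ⟨a, b, -⟩; exact ⟨a, b, trivial⟩
    · rintro ⟨a, b, -⟩; exact ⟨a, b, trivial⟩
  | cons p A ih =>
    obtain ⟨s, σ⟩ := p
    intro r ρ t
    show (¬ ∃ c, lastRun T r (A ++ [(t,ρ)]) = c * (s : FreeMonoid X)) ∧
        (¬ ∃ c, σ = (s : FreeMonoid X) * c) ∧ RedR T r (A ++ [(t,ρ)]) ↔ _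
    rw [lastRun_wordSnoc, ih r ρ t]
    show _ ↔ _ ∧ _ ∧ ((¬ ∃ c, lastRun T ρ A = c * (s : FreeMonoid X)) ∧
        (¬ ∃ c, σ = (s : FreeMonoid X) * c) ∧ RedR T ρ A)
    tauto

theorem red_unique_one (h1 : (1 : FreeMonoid X) ∉ T) (hT : OverlapFree T)
    {r : FreeMonoid X} {L : List (↥T × FreeMonoid X)} (h : RedR T r L)
    (hc : ((decodeW T r L : FreeMonoid (X ⊕ ↥T)) : (invCon T).Quotient) = 1) :
    r = 1 ∧ L = [] := by
  have hcc : invCon T (decodeW T r L) (decodeW T 1 []) := by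
    apply ((invCon T).eq).mp
    rw [hc, show decodeW T (1 : FreeMonoid X) [] = 1 from map_one (emb T), Con.coe_one]
  exact red_unique h1 hT h trivial hcc

def CC (T : Set (FreeMonoid X)) : FreeMonoid X → FreeMonoid X → List (↥T × FreeMonoid X) → Prop
  | v, r, [] => v * r = 1
  | v, r, (t, ρ) :: W => ∃ c, v * r = c * (t : FreeMonoid X) ∧ CC T c ρ W

theorem lemC (h1 : (1 : FreeMonoid X) ∉ T) (hT : OverlapFree T)
    (A : List (↥T × FreeMonoid X)) : ∀ (v r : FreeMonoid X), RedR T r A →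
    ((emb T v * decodeW T r A : FreeMonoid (X ⊕ ↥T)) : (invCon T).Quotient) = 1 →
    CC T v r A.reverse := by
  induction A using List.reverseRecOn with
  | nil =>
    intro v r _ hc
    show v * r = 1
    have e1 : emb T v * decodeW T r [] = decodeW T (v * r) [] := by
      show emb T v * emb T r = emb T (v * r)
      rw [map_mul]
    rw [e1] at hc
    exact (red_unique_one h1 hT (show RedR T (v*r) [] from trivial) hc).1
  | append_singleton A p ih =>
    obtain ⟨t, ρ⟩ := p
    intro v r hred hc
    have hsnoc := (RedR_wordSnoc A r ρ t).mp hred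
    simp only [List.reverse_append, List.reverse_singleton, List.singleton_append]
    by_cases hft : ∃ c, v * r = c * (t : FreeMonoid X)
    · obtain ⟨c, hcc⟩ := hft
      have knew : ((emb T c * decodeW T ρ A : FreeMonoid (X ⊕ ↥T)) : (invCon T).Quotient)
          = 1 := by
        have e2 : emb T v * emb T r = emb T c * emb T ↑t := by
          rw [← map_mul, ← map_mul, hcc]
        have e1 : emb T v * decodeW T r (A ++ [(t,ρ)])
            = emb T c * (emb T ↑t * igen T t) * decodeW T ρ A := by
          rw [decode_wordSnoc]
          calc emb T v * (emb T r * igen T t * decodeW T ρ A)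
              = emb T v * emb T r * igen T t * decodeW T ρ A := by simp [mul_assoc]
            _ = emb T c * emb T ↑t * igen T t * decodeW T ρ A := by rw [e2]
            _ = emb T c * (emb T ↑t * igen T t) * decodeW T ρ A := by simp [mul_assoc]
        rw [e1, Con.coe_mul, Con.coe_mul, Con.coe_mul, qrel1 t, mul_one, ← Con.coe_mul] at hc
        exact hc
      exact ⟨c, hcc, ih c ρ hsnoc.2.2 knew⟩
    · have hred2 : RedR T (v * r) (A ++ [(t,ρ)]) :=
        (RedR_wordSnoc A (v*r) ρ t).mpr ⟨hft, hsnoc.2.1, hsnoc.2.2⟩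
      have hc2 : ((decodeW T (v*r) (A ++ [(t,ρ)]) : FreeMonoid (X ⊕ ↥T))
          : (invCon T).Quotient) = 1 := by
        have e1 : decodeW T (v*r) (A ++ [(t,ρ)]) = emb T v * decodeW T r (A ++ [(t,ρ)]) := by
          rw [decode_wordSnoc, decode_wordSnoc, map_mul]
          simp [mul_assoc]
        rw [e1]
        exact hc
      obtain ⟨-, habs⟩ := red_unique_one h1 hT hred2 hc2
      simp at habs

theorem lemB (h1 : (1 : FreeMonoid X) ∉ T) (hT : OverlapFree T)
    (L : List (↥T × FreeMonoid X)) : ∀ (r w : FreeMonoid X), RedR T r L →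
    ((decodeW T r L * emb T w : FreeMonoid (X ⊕ ↥T)) : (invCon T).Quotient) = 1 →
    r = 1 ∧ ∀ p ∈ L, ∃ π : FreeMonoid X, π ≠ 1 ∧ (p.1 : FreeMonoid X) = p.2 * π := by
  induction L with
  | nil =>
    intro r w _ hc
    have e1 : decodeW T r [] * emb T w = decodeW T (r * w) [] := by
      show emb T r * emb T w = emb T (r * w)
      rw [map_mul]
    rw [e1] at hc
    obtain ⟨hrw, -⟩ := red_unique_one h1 hT (show RedR T (r*w) [] from trivial) hc
    exact ⟨(fm_mul_eq_one hrw).1, by simp⟩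
  | cons p L ih =>
    obtain ⟨t, ρ⟩ := p
    intro r w hred hc
    by_cases hp : ∃ c, ρ * w = (t : FreeMonoid X) * c
    · obtain ⟨c2, hc2⟩ := hp
      rcases fm_split hc2 with ⟨π, hπ1, hπ2⟩ | ⟨e, he1, he2⟩
      · have hπne : π ≠ 1 := by
          intro h0
          rw [h0, mul_one] at hπ1
          exact hred.2.1 ⟨1, by rw [mul_one]; exact hπ1.symm⟩
        have hnew : ((decodeW T r L * emb T c2 : FreeMonoid (X ⊕ ↥T))
            : (invCon T).Quotient) = 1 := by
          have e1 : decodeW T r ((t,ρ)::L) * emb T w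
              = decodeW T r L * (igen T t * emb T ↑t) * emb T c2 := by
            show decodeW T r L * igen T t * emb T ρ * emb T w = _
            calc decodeW T r L * igen T t * emb T ρ * emb T w
                = decodeW T r L * igen T t * (emb T ρ * emb T w) := by rw [mul_assoc]
              _ = decodeW T r L * igen T t * (emb T ↑t * emb T c2) := by
                  rw [← map_mul, hc2, map_mul]
              _ = decodeW T r L * (igen T t * emb T ↑t) * emb T c2 := by simp [mul_assoc]
          rw [e1, Con.coe_mul, Con.coe_mul, Con.coe_mul, qrel2 t, mul_one, ← Con.coe_mul] at hc
          exact hc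
        obtain ⟨hr1, hall⟩ := ih r c2 hred.2.2 hnew
        refine ⟨hr1, ?_⟩
        intro p hp
        rcases List.mem_cons.mp hp with rfl | hmem
        · exact ⟨π, hπne, hπ1⟩
        · exact hall p hmem
      · exact absurd ⟨e, he1⟩ hred.2.1
    · have hred2 : RedR T r ((t, ρ * w)::L) := ⟨hred.1, hp, hred.2.2⟩
      have hc2 : ((decodeW T r ((t, ρ*w)::L) : FreeMonoid (X ⊕ ↥T))
          : (invCon T).Quotient) = 1 := by
        have e1 : decodeW T r ((t,ρ*w)::L) = decodeW T r ((t,ρ)::L) * emb T w := by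
          show decodeW T r L * igen T t * emb T (ρ * w)
              = decodeW T r L * igen T t * emb T ρ * emb T w
          rw [map_mul]
          simp [mul_assoc]
        rw [e1]
        exact hc
      obtain ⟨-, habs⟩ := red_unique_one h1 hT hred2 hc2
      simp at habs

def REDw (T : Set (FreeMonoid X)) : FreeMonoid X → List (↥T × FreeMonoid X) → Prop
  | _, [] => True
  | ρ, (t, σ) :: W => (¬ ∃ f, ρ = f * (t : FreeMonoid X)) ∧ REDw T σ W

theorem redw_of_redr (A : List (↥T × FreeMonoid X)) : ∀ r : FreeMonoid X,
    RedR T r A → REDw T r A.reverse := by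
  induction A using List.reverseRecOn with
  | nil => intro r _; trivial
  | append_singleton A p ih =>
    obtain ⟨t, ρ⟩ := p
    intro r h
    have hs := (RedR_wordSnoc A r ρ t).mp h
    simp only [List.reverse_append, List.reverse_singleton, List.singleton_append]
    exact ⟨hs.1, ih ρ hs.2.2⟩

theorem lemE (hT : OverlapFree T) (W : List (↥T × FreeMonoid X)) :
    ∀ (cw ρ : FreeMonoid X) (t0 : ↥T) (π0 : FreeMonoid X), π0 ≠ 1 →
    (t0 : FreeMonoid X) = ρ * π0 → REDw T ρ W →
    (∀ p ∈ W, ∃ π : FreeMonoid X, π ≠ 1 ∧ (p.1 : FreeMonoid X) = p.2 * π) →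
    CC T cw ρ W → cw ∈ Submonoid.closure T := by
  induction W with
  | nil =>
    intro cw ρ _ _ _ _ _ _ hcc
    have h0 : cw * ρ = 1 := hcc
    rw [(fm_mul_eq_one h0).1]
    exact Submonoid.one_mem _
  | cons p W ih =>
    obtain ⟨t', ρ'⟩ := p
    intro cw ρ t0 π0 hπ0 ht0 hredw hshape hcc
    obtain ⟨c', hrel, hcc'⟩ := hcc
    obtain ⟨π', hπ', ht'⟩ := hshape (t', ρ') (List.mem_cons_self)
    have hc' : c' ∈ Submonoid.closure T :=
      ih c' ρ' t' π' hπ' ht' hredw.2 (fun q hq => hshape q (List.mem_cons_of_mem _ hq)) hcc'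
    rcases fm_split hrel with ⟨e, he1, he2⟩ | ⟨e, he1, he2⟩
    · exact absurd ⟨e, he2⟩ hredw.1
    · by_cases he : e = 1
      · rw [he1, he, mul_one]
        exact hc'
      by_cases hρ : ρ = 1
      · rw [he1]
        refine Submonoid.mul_mem _ hc' ?_
        have he' : (e : FreeMonoid X) = ↑t' := by rw [he2, hρ, mul_one]
        rw [he']
        exact Submonoid.subset_closure t'.2
      · exact absurd ⟨e, ρ, π0, hρ, Or.inl he, he2, ht0⟩ (hT _ t'.2 _ t0.2)


end Machine4
section Final
variable {T : Set (FreeMonoid X)}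

theorem unit_of_mem {t : FreeMonoid X} (ht : t ∈ T) : IsUnit (natHom T t) :=
  ⟨⟨natHom T t, invElt T ⟨t, ht⟩, qrel1 ⟨t, ht⟩, qrel2 ⟨t, ht⟩⟩, rfl⟩

theorem unit_of_closure {w : FreeMonoid X} (hw : w ∈ Submonoid.closure T) :
    IsUnit (natHom T w) := by
  induction hw using Submonoid.closure_induction with
  | mem t ht => exact unit_of_mem ht
  | one => simp
  | mul x y hx hy ux uy => rw [map_mul]; exact ux.mul uy

theorem closure_decomp {u : FreeMonoid X} (hu : u ∈ Submonoid.closure T) :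
    u = 1 ∨ ∃ t ∈ T, ∃ u', u' ∈ Submonoid.closure T ∧ u = t * u' := by
  induction hu using Submonoid.closure_induction with
  | mem t ht => exact Or.inr ⟨t, ht, 1, Submonoid.one_mem _, (mul_one t).symm⟩
  | one => exact Or.inl rfl
  | mul x y hx hy px py =>
    rcases px with h0 | ⟨t, ht, u', hu', hx'⟩
    · rw [h0, one_mul]; exact py
    · exact Or.inr ⟨t, ht, u' * y, Submonoid.mul_mem _ hu' hy, by rw [hx', mul_assoc]⟩

theorem closure_of_unit (h1 : (1 : FreeMonoid X) ∉ T) (hT : OverlapFree T) {w : FreeMonoid X}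
    (hw : IsUnit (natHom T w)) : w ∈ Submonoid.closure T := by
  obtain ⟨q, hq1, hq2⟩ : ∃ q : AdjInv T, natHom T w * q = 1 ∧ q * natHom T w = 1 :=
    ⟨↑hw.unit⁻¹, hw.mul_val_inv, hw.val_inv_mul⟩
  obtain ⟨u, rfl⟩ : ∃ u : FreeMonoid (X ⊕ ↥T), ((u : (invCon T).Quotient) : AdjInv T) = q :=
    Con.mk'_surjective q
  rcases hPQ : PsiQ h1 hT ↑u with ⟨⟨r, L⟩, hred⟩
  have hdec : ((decodeW T r L : FreeMonoid (X ⊕ ↥T)) : (invCon T).Quotient) = ↑u := by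
    have hd := decode_PsiQ h1 hT u
    rw [hPQ] at hd
    exact hd
  have hc1 : ((emb T w * decodeW T r L : FreeMonoid (X ⊕ ↥T)) : (invCon T).Quotient) = 1 := by
    rw [Con.coe_mul, hdec]
    exact hq1
  have hc2 : ((decodeW T r L * emb T w : FreeMonoid (X ⊕ ↥T)) : (invCon T).Quotient) = 1 := by
    rw [Con.coe_mul, hdec]
    exact hq2
  obtain ⟨hr1, hshape⟩ := lemB h1 hT L r w hred hc2
  have hcc : CC T w r L.reverse := lemC h1 hT L w r hred hc1
  have hredw : REDw T r L.reverse := redw_of_redr L r hred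
  rcases hL : L.reverse with _ | ⟨⟨t, ρ⟩, W⟩
  · rw [hL] at hcc
    have h0 : w * r = 1 := hcc
    rw [(fm_mul_eq_one h0).1]
    exact Submonoid.one_mem _
  · rw [hL] at hcc hredw
    obtain ⟨c, hcrel, hcc'⟩ := hcc
    have hmem : ((t, ρ) : ↥T × FreeMonoid X) ∈ L :=
      List.mem_reverse.mp (by rw [hL]; exact List.mem_cons_self)
    obtain ⟨π, hπ, htπ⟩ := hshape (t, ρ) hmem
    have hcclo : c ∈ Submonoid.closure T :=
      lemE hT W c ρ t π hπ htπ hredw.2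
        (fun q hq => hshape q (List.mem_reverse.mp (by rw [hL]; exact List.mem_cons_of_mem _ hq)))
        hcc'
    have hw' : w = c * ↑t := by
      rw [hr1, mul_one] at hcrel
      exact hcrel
    rw [hw']
    exact Submonoid.mul_mem _ hcclo (Submonoid.subset_closure t.2)

theorem stmt10' (h1 : (1 : FreeMonoid X) ∉ T) (hT : OverlapFree T) :
    T = {w : FreeMonoid X | w ≠ 1 ∧ IsUnit (natHom T w) ∧
      ¬∃ u v : FreeMonoid X, u ≠ 1 ∧ v ≠ 1 ∧
        IsUnit (natHom T u) ∧ IsUnit (natHom T v) ∧ w = u * v} := by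
  ext w
  simp only [Set.mem_setOf_eq]
  constructor
  · intro hwT
    refine ⟨fun h0 => h1 (h0 ▸ hwT), unit_of_mem hwT, ?_⟩
    rintro ⟨u, v, hu, hv, huu, huv, rfl⟩
    have hucl := closure_of_unit h1 hT huu
    rcases closure_decomp hucl with rfl | ⟨t, ht, u', hu', rfl⟩
    · exact hu rfl
    · refine hT t ht _ hwT ⟨1, t, u' * v, fun h0 => h1 (h0 ▸ ht), ?_, (one_mul t).symm,
        mul_assoc t u' v⟩
      right
      intro h0
      exact hv (fm_mul_eq_one h0).2
  · rintro ⟨hw1, hwu, hnf⟩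
    have hcl := closure_of_unit h1 hT hwu
    rcases closure_decomp hcl with rfl | ⟨t, ht, u', hu', rfl⟩
    · exact absurd rfl hw1
    · rcases eq_or_ne u' 1 with rfl | hu'1
      · rw [mul_one]; exact ht
      · exact absurd ⟨t, u', fun h0 => h1 (h0 ▸ ht), hu'1, unit_of_mem ht,
          unit_of_closure hu', rfl⟩ hnf


end Final

/-- `T` is precisely the set of nonidentity elements of `⟨X⟩` which become
invertible in `⟨X : i(T)⟩` but have no factorization into two nonidentity elements of
`⟨X⟩` becoming invertible in `⟨X : i(T)⟩`. -/
theorem stmt10 (X : Type*) (T : Set (FreeMonoid X))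
    (h1 : (1 : FreeMonoid X) ∉ T) (hT : OverlapFree T) :
    T = {w : FreeMonoid X | w ≠ 1 ∧ IsUnit (natHom T w) ∧
      ¬∃ u v : FreeMonoid X, u ≠ 1 ∧ v ≠ 1 ∧
        IsUnit (natHom T u) ∧ IsUnit (natHom T v) ∧ w = u * v} :=
  stmt10' h1 hT

end AdjoinInverses
end
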